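/- arXiv:1508.07540 — 5 statements merged into one kernel-verified Lean document; each statement's English description precedes it below -/
import Mathlib

section
/- Let n ≥ m ≥ 1 be integers and let P_{n,m} = {σ ⊆ [n] : σ contains no m consecutive integers}. Then the Stanley depth of the poset P_{n,m} equals n + 1 − ⌊(n+1)/(m+1)⌋ − ⌈(n+1)/(m+1)⌉; i.e., there is a partition of P_{n,m} into intervals [F_i,G_i] with every |G_i| ≥ n + 1 − ⌊(n+1)/(m+1)⌋ − ⌈(n+1)/(m+1)⌉, and no partition does better. -/
/-- `σ` contains `m` consecutive integers, i.e. there is `i` with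
`{i, i+1, …, i+m-1} ⊆ σ`. -/
def HasConsec (m : ℕ) (σ : Finset ℕ) : Prop :=
  ∃ i : ℕ, ∀ l < m, i + l ∈ σ

/-- The Herzog–Vladoiu–Zheng characteristic poset `P_{n,m}` of `S/I_{n,m}`:
the subsets of `[n] = {1,…,n}` containing no `m` consecutive integers. -/
def pathPoset (n m : ℕ) : Set (Finset ℕ) :=
  {σ | σ ⊆ Finset.Icc 1 n ∧ ¬ HasConsec m σ}

/-- `Pp` is a partition of the family `P` into intervals `[F,G] = {X | F ⊆ X ⊆ G}`:
the intervals are pairwise disjoint and their union is `P`. -/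
def IsIntervalPartition (P : Set (Finset ℕ)) (Pp : Finset (Finset ℕ × Finset ℕ)) : Prop :=
  (∀ p ∈ Pp, p.1 ⊆ p.2) ∧
  (∀ p ∈ Pp, ∀ q ∈ Pp, p ≠ q →
    ∀ X : Finset ℕ, ¬((p.1 ⊆ X ∧ X ⊆ p.2) ∧ (q.1 ⊆ X ∧ X ⊆ q.2))) ∧
  (∀ X : Finset ℕ, X ∈ P ↔ ∃ p ∈ Pp, p.1 ⊆ X ∧ X ⊆ p.2)

open Finset
open Finset


def dd (m k : ℕ) : ℕ := k + 1 - (k + 1) / (m + 1) - (k + m + 1) / (m + 1)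

lemma add_div_le' (a b n : ℕ) : a / n + b / n ≤ (a + b) / n := by
  rcases Nat.eq_zero_or_pos n with h | h
  · simp [h]
  · rw [Nat.le_div_iff_mul_le h, add_mul]
    exact Nat.add_le_add (Nat.div_mul_le_self a n) (Nat.div_mul_le_self b n)

lemma div_one' (m a : ℕ) (h1 : m + 1 ≤ a) (h2 : a < 2 * (m + 1)) : a / (m + 1) = 1 :=
  Nat.div_eq_of_lt_le (by omega) (by omega)

lemma fc_sum (m : ℕ) (hm : 1 ≤ m) : ∀ j : ℕ, (j + 1) / (m + 1) + (j + m + 1) / (m + 1) ≤ j + 1 := by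
  intro j
  induction j using Nat.strong_induction_on with
  | _ j ih =>
    rcases lt_or_ge j m with h | h
    · have h1 : (j + 1) / (m + 1) = 0 := Nat.div_eq_of_lt (by omega)
      have h2 : (j + m + 1) / (m + 1) = 1 := div_one' m _ (by omega) (by omega)
      omega
    · rcases eq_or_lt_of_le h with h' | h'
      · have h1 : (j + 1) / (m + 1) = 1 := by
          subst h'; exact div_one' m _ (by omega) (by omega)
        have h2 : (j + m + 1) / (m + 1) = 1 := by
          subst h'; exact div_one' m _ (by omega) (by omega)
        omega
      · have h1 : (j + 1) / (m + 1) = (j - m - 1 + 1) / (m + 1) + 1 := by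
          rw [show j + 1 = (j - m - 1 + 1) + (m + 1) by omega, Nat.add_div_right _ (by omega)]
        have h2 : (j + m + 1) / (m + 1) = (j - m - 1 + m + 1) / (m + 1) + 1 := by
          rw [show j + m + 1 = (j - m - 1 + m + 1) + (m + 1) by omega,
            Nat.add_div_right _ (by omega)]
        have := ih (j - m - 1) (by omega)
        omega

/-- small values: `dd m j = j` for `j ≤ m - 1`. -/
lemma dd_small (m : ℕ) (hm : 1 ≤ m) (j : ℕ) (h : j + 1 ≤ m) : dd m j = j := by
  have h1 : (j + 1) / (m + 1) = 0 := Nat.div_eq_of_lt (by omega)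
  have h2 : (j + m + 1) / (m + 1) = 1 := div_one' m _ (by omega) (by omega)
  unfold dd; omega

lemma dd_m (m : ℕ) (hm : 1 ≤ m) : dd m m = m - 1 := by
  have h1 : (m + 1) / (m + 1) = 1 := Nat.div_self (by omega)
  have h2 : (m + m + 1) / (m + 1) = 1 := div_one' m _ (by omega) (by omega)
  unfold dd; omega

/-- step: for `k ≥ m+1`, `dd m k = dd m (k-m-1) + (m-1)`. -/
lemma dd_step (m k : ℕ) (hm : 1 ≤ m) (hk : m + 1 ≤ k) :
    dd m k = dd m (k - m - 1) + (m - 1) := by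
  set j := k - m - 1 with hj
  have h1 : (k + 1) / (m + 1) = (j + 1) / (m + 1) + 1 := by
    rw [show k + 1 = (j + 1) + (m + 1) by omega, Nat.add_div_right _ (by omega)]
  have h2 : (k + m + 1) / (m + 1) = (j + m + 1) / (m + 1) + 1 := by
    rw [show k + m + 1 = (j + m + 1) + (m + 1) by omega, Nat.add_div_right _ (by omega)]
  have h3 := fc_sum m hm j
  unfold dd; omega

/-- gap: `dd m k + 2 ≤ g + dd m j` when `j + g = k` and `g ≥ m + 2`. -/
lemma dd_gap (m k j g : ℕ) (hm : 1 ≤ m) (hg : m + 2 ≤ g) (hjg : j + g = k) :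
    dd m k + 2 ≤ g + dd m j := by
  have hf : (j + 1) / (m + 1) + 1 ≤ (k + 1) / (m + 1) := by
    have h1 : (j + 1) / (m + 1) + g / (m + 1) ≤ (k + 1) / (m + 1) := by
      have := add_div_le' (j + 1) g (m + 1); rwa [show j + 1 + g = k + 1 by omega] at this
    have h2 : 1 ≤ g / (m + 1) := Nat.one_le_div_iff (by omega) |>.2 (by omega)
    omega
  have hc : (j + m + 1) / (m + 1) + 1 ≤ (k + m + 1) / (m + 1) := by
    have h1 : (j + m + 1) / (m + 1) + g / (m + 1) ≤ (k + m + 1) / (m + 1) := by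
      have := add_div_le' (j + m + 1) g (m + 1)
      rwa [show j + m + 1 + g = k + m + 1 by omega] at this
    have h2 : 1 ≤ g / (m + 1) := Nat.one_le_div_iff (by omega) |>.2 (by omega)
    omega
  have h3 := fc_sum m hm j
  have h4 := fc_sum m hm k
  unfold dd; omega

lemma dd_le_self (m k : ℕ) : dd m k ≤ k := by
  have h2 : 1 ≤ (k + m + 1) / (m + 1) := Nat.one_le_div_iff (by omega) |>.2 (by omega)
  have h1 : 0 ≤ (k + 1) / (m + 1) := Nat.zero_le _
  unfold dd
  generalize (k + 1) / (m + 1) = a at *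
  generalize (k + m + 1) / (m + 1) = b at *
  omega

lemma dd_lt_self (m k : ℕ) (hm : 1 ≤ m) (hk : m + 1 ≤ k) : dd m k + 1 ≤ k := by
  have h1 : 1 ≤ (k + 1) / (m + 1) := Nat.one_le_div_iff (by omega) |>.2 (by omega)
  have h2 : 2 ≤ (k + m + 1) / (m + 1) := by
    have : (k + m + 1) / (m + 1) = (k - m - 1 + m + 1) / (m + 1) + 1 := by
      rw [show k + m + 1 = (k - m - 1 + m + 1) + (m + 1) by omega, Nat.add_div_right _ (by omega)]
    have h3 : 1 ≤ (k - m - 1 + m + 1) / (m + 1) := Nat.one_le_div_iff (by omega) |>.2 (by omega)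
    omega
  unfold dd; omega

lemma hasConsec_mono {m : ℕ} {σ τ : Finset ℕ} (h : σ ⊆ τ) (hc : HasConsec m σ) :
    HasConsec m τ := by
  obtain ⟨i, hi⟩ := hc
  exact ⟨i, fun l hl => h (hi l hl)⟩

lemma run_card {m i : ℕ} {s : Finset ℕ} (h : ∀ l < m, i + l ∈ s) : m ≤ s.card := by
  have hsub : (Finset.range m).image (i + ·) ⊆ s := by
    intro x hx
    simp only [mem_image, mem_range] at hx
    obtain ⟨l, hl, rfl⟩ := hx
    exact h l hl
  have := Finset.card_le_card hsub
  rwa [Finset.card_image_of_injective _ (fun a b => by omega), Finset.card_range] at this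

/-- tops and bottoms of a partition belong to the family -/
lemma part_top_mem {P : Set (Finset ℕ)} {Pp : Finset (Finset ℕ × Finset ℕ)}
    (h : IsIntervalPartition P Pp) {p : Finset ℕ × Finset ℕ} (hp : p ∈ Pp) : p.2 ∈ P :=
  (h.2.2 p.2).2 ⟨p, hp, h.1 p hp, Finset.Subset.refl _⟩

/-- the glued family -/
def Cglue (U V K : Finset ℕ) (A B : Set (Finset ℕ)) : Set (Finset ℕ) :=
  {X | K ⊆ X ∧ X ⊆ U ∪ K ∪ V ∧ (X ∩ U) ∈ A ∧ (X ∩ V) ∈ B}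

/-- glue two interval partitions on disjoint grounds, with a common forced block K -/
lemma glue {U V K : Finset ℕ} {A B : Set (Finset ℕ)}
    {PA PB : Finset (Finset ℕ × Finset ℕ)}
    (hA : IsIntervalPartition A PA) (hB : IsIntervalPartition B PB)
    (hAU : ∀ S ∈ A, S ⊆ U) (hBV : ∀ S ∈ B, S ⊆ V)
    (hUV : Disjoint U V) (hUK : Disjoint U K) (hVK : Disjoint V K) :
    IsIntervalPartition (Cglue U V K A B)
      ((PA ×ˢ PB).image (fun q => (q.1.1 ∪ q.2.1 ∪ K, q.1.2 ∪ q.2.2 ∪ K))) ∧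
    (∀ p ∈ (PA ×ˢ PB).image (fun q => (q.1.1 ∪ q.2.1 ∪ K, q.1.2 ∪ q.2.2 ∪ K)),
      ∃ pa ∈ PA, ∃ pb ∈ PB, p.2.card = pa.2.card + pb.2.card + K.card) := by
  have dUV : ∀ x, x ∈ U → x ∈ V → False := fun x h1 h2 =>
    Finset.disjoint_left.1 hUV h1 h2
  have dUK : ∀ x, x ∈ U → x ∈ K → False := fun x h1 h2 =>
    Finset.disjoint_left.1 hUK h1 h2
  have dVK : ∀ x, x ∈ V → x ∈ K → False := fun x h1 h2 =>
    Finset.disjoint_left.1 hVK h1 h2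
  have key : ∀ pa ∈ PA, ∀ pb ∈ PB, ∀ X : Finset ℕ,
      (pa.1 ∪ pb.1 ∪ K ⊆ X ∧ X ⊆ pa.2 ∪ pb.2 ∪ K) ↔
      (K ⊆ X ∧ X ⊆ U ∪ K ∪ V ∧ (pa.1 ⊆ X ∩ U ∧ X ∩ U ⊆ pa.2) ∧ (pb.1 ⊆ X ∩ V ∧ X ∩ V ⊆ pb.2)) := by
    intro pa hpa pb hpb X
    have ha2 : pa.2 ⊆ U := hAU _ (part_top_mem hA hpa)
    have ha1 : pa.1 ⊆ U := fun x hx => ha2 (hA.1 pa hpa hx)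
    have hb2 : pb.2 ⊆ V := hBV _ (part_top_mem hB hpb)
    have hb1 : pb.1 ⊆ V := fun x hx => hb2 (hB.1 pb hpb hx)
    constructor
    · rintro ⟨h1, h2⟩
      refine ⟨fun x hx => h1 (by simp [hx]), ?_, ⟨?_, ?_⟩, ⟨?_, ?_⟩⟩
      · intro x hx
        rcases Finset.mem_union.1 (h2 hx) with h | h
        · rcases Finset.mem_union.1 h with h | h
          · exact Finset.mem_union_left _ (Finset.mem_union_left _ (ha2 h))
          · exact Finset.mem_union_right _ (hb2 h)
        · exact Finset.mem_union_left _ (Finset.mem_union_right _ h)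
      · intro x hx
        exact Finset.mem_inter.2 ⟨h1 (by simp [hx]), ha1 hx⟩
      · intro x hx
        rcases Finset.mem_inter.1 hx with ⟨hxX, hxU⟩
        rcases Finset.mem_union.1 (h2 hxX) with h | h
        · rcases Finset.mem_union.1 h with h | h
          · exact h
          · exact absurd (hb2 h) (fun hv => dUV x hxU hv)
        · exact absurd h (fun hk => dUK x hxU hk)
      · intro x hx
        exact Finset.mem_inter.2 ⟨h1 (by simp [hx]), hb1 hx⟩
      · intro x hx
        rcases Finset.mem_inter.1 hx with ⟨hxX, hxV⟩
        rcases Finset.mem_union.1 (h2 hxX) with h | h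
        · rcases Finset.mem_union.1 h with h | h
          · exact absurd (ha2 h) (fun hu => dUV x hu hxV)
          · exact h
        · exact absurd h (fun hk => dVK x hxV hk)
    · rintro ⟨hK, hsub, ⟨ha1x, ha2x⟩, ⟨hb1x, hb2x⟩⟩
      constructor
      · intro x hx
        rcases Finset.mem_union.1 hx with h | h
        · rcases Finset.mem_union.1 h with h | h
          · exact (Finset.mem_inter.1 (ha1x h)).1
          · exact (Finset.mem_inter.1 (hb1x h)).1
        · exact hK h
      · intro x hx
        rcases Finset.mem_union.1 (hsub hx) with h | h
        · rcases Finset.mem_union.1 h with h | h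
          · exact Finset.mem_union_left _ (Finset.mem_union_left _
              (ha2x (Finset.mem_inter.2 ⟨hx, h⟩)))
          · exact Finset.mem_union_right _ h
        · exact Finset.mem_union_left _ (Finset.mem_union_right _
            (hb2x (Finset.mem_inter.2 ⟨hx, h⟩)))
  constructor
  · refine ⟨?_, ?_, ?_⟩
    · -- wellformed
      intro p hp
      simp only [Finset.mem_image, Finset.mem_product] at hp
      obtain ⟨⟨pa, pb⟩, ⟨hpa, hpb⟩, rfl⟩ := hp
      exact Finset.union_subset_union (Finset.union_subset_union (hA.1 _ hpa) (hB.1 _ hpb))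
        (Finset.Subset.refl _)
    · -- disjoint
      intro p hp q hq hpq X hX
      simp only [Finset.mem_image, Finset.mem_product] at hp hq
      obtain ⟨⟨pa, pb⟩, ⟨hpa, hpb⟩, rfl⟩ := hp
      obtain ⟨⟨qa, qb⟩, ⟨hqa, hqb⟩, rfl⟩ := hq
      obtain ⟨hX1, hX2⟩ := hX
      have k1 := (key pa hpa pb hpb X).1 hX1
      have k2 := (key qa hqa qb hqb X).1 hX2
      have eqa : pa = qa := by
        by_contra hne
        exact hA.2.1 pa hpa qa hqa hne (X ∩ U) ⟨k1.2.2.1, k2.2.2.1⟩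
      have eqb : pb = qb := by
        by_contra hne
        exact hB.2.1 pb hpb qb hqb hne (X ∩ V) ⟨k1.2.2.2, k2.2.2.2⟩
      exact hpq (by rw [eqa, eqb])
    · -- coverage
      intro X
      constructor
      · rintro ⟨hK, hsub, hXA, hXB⟩
        obtain ⟨pa, hpa, hpaX⟩ := (hA.2.2 (X ∩ U)).1 hXA
        obtain ⟨pb, hpb, hpbX⟩ := (hB.2.2 (X ∩ V)).1 hXB
        refine ⟨(pa.1 ∪ pb.1 ∪ K, pa.2 ∪ pb.2 ∪ K), ?_, ?_⟩
        · exact Finset.mem_image.2 ⟨(pa, pb), Finset.mem_product.2 ⟨hpa, hpb⟩, rfl⟩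
        · exact (key pa hpa pb hpb X).2 ⟨hK, hsub, hpaX, hpbX⟩
      · rintro ⟨p, hp, hpX⟩
        simp only [Finset.mem_image, Finset.mem_product] at hp
        obtain ⟨⟨pa, pb⟩, ⟨hpa, hpb⟩, rfl⟩ := hp
        have k := (key pa hpa pb hpb X).1 hpX
        exact ⟨k.1, k.2.1, (hA.2.2 (X ∩ U)).2 ⟨pa, hpa, k.2.2.1⟩,
          (hB.2.2 (X ∩ V)).2 ⟨pb, hpb, k.2.2.2⟩⟩
  · -- cards
    intro p hp
    simp only [Finset.mem_image, Finset.mem_product] at hp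
    obtain ⟨⟨pa, pb⟩, ⟨hpa, hpb⟩, rfl⟩ := hp
    refine ⟨pa, hpa, pb, hpb, ?_⟩
    have ha2 : pa.2 ⊆ U := hAU _ (part_top_mem hA hpa)
    have hb2 : pb.2 ⊆ V := hBV _ (part_top_mem hB hpb)
    rw [Finset.card_union_of_disjoint, Finset.card_union_of_disjoint]
    · exact Finset.disjoint_of_subset_left ha2 (Finset.disjoint_of_subset_right hb2 hUV)
    · refine Finset.disjoint_union_left.2 ⟨?_, ?_⟩
      · exact Finset.disjoint_of_subset_left ha2 hUK
      · exact Finset.disjoint_of_subset_left hb2 hVK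

lemma assemble {I : Type*} [DecidableEq I] {P : Set (Finset ℕ)} {ι : Finset I}
    {C : I → Set (Finset ℕ)} {PC : I → Finset (Finset ℕ × Finset ℕ)}
    (hdisj : ∀ i ∈ ι, ∀ j ∈ ι, i ≠ j → ∀ X, X ∈ C i → X ∈ C j → False)
    (hcov : ∀ X, X ∈ P ↔ ∃ i ∈ ι, X ∈ C i)
    (hloc : ∀ i ∈ ι, IsIntervalPartition (C i) (PC i)) :
    IsIntervalPartition P (ι.biUnion PC) := by
  refine ⟨?_, ?_, ?_⟩
  · intro p hp
    obtain ⟨i, hi, hpi⟩ := Finset.mem_biUnion.1 hp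
    exact (hloc i hi).1 p hpi
  · intro p hp q hq hpq X hX
    obtain ⟨i, hi, hpi⟩ := Finset.mem_biUnion.1 hp
    obtain ⟨j, hj, hqj⟩ := Finset.mem_biUnion.1 hq
    rcases eq_or_ne i j with rfl | hij
    · exact (hloc i hi).2.1 p hpi q hqj hpq X hX
    · have hXi : X ∈ C i := ((hloc i hi).2.2 X).2 ⟨p, hpi, hX.1⟩
      have hXj : X ∈ C j := ((hloc j hj).2.2 X).2 ⟨q, hqj, hX.2⟩
      exact hdisj i hi j hj hij X hXi hXj
  · intro X
    constructor
    · intro hX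
      obtain ⟨i, hi, hXi⟩ := (hcov X).1 hX
      obtain ⟨p, hp, hpX⟩ := ((hloc i hi).2.2 X).1 hXi
      exact ⟨p, Finset.mem_biUnion.2 ⟨i, hi, hp⟩, hpX⟩
    · rintro ⟨p, hp, hpX⟩
      obtain ⟨i, hi, hpi⟩ := Finset.mem_biUnion.1 hp
      exact (hcov X).2 ⟨i, hi, ((hloc i hi).2.2 X).2 ⟨p, hpi, hpX⟩⟩
def pp (m t k : ℕ) : Set (Finset ℕ) :=
  {σ | σ ⊆ Finset.Icc (t + 1) (t + k) ∧ ¬ HasConsec m σ}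

lemma base_small (m t k : ℕ) (hm : 1 ≤ m) (hk : k < m) :
    IsIntervalPartition (pp m t k) {(∅, Finset.Icc (t + 1) (t + k))} := by
  refine ⟨?_, ?_, ?_⟩
  · intro p hp
    simp only [mem_singleton] at hp
    subst hp
    exact Finset.empty_subset _
  · intro p hp q hq hpq
    simp only [mem_singleton] at hp hq
    exact absurd (hp.trans hq.symm) hpq
  · intro X
    constructor
    · intro hX
      exact ⟨(∅, Finset.Icc (t+1) (t+k)), mem_singleton_self _, Finset.empty_subset _, hX.1⟩
    · rintro ⟨p, hp, -, h2⟩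
      simp only [mem_singleton] at hp
      subst hp
      refine ⟨h2, ?_⟩
      rintro ⟨i, hi⟩
      have hcard := run_card hi
      have := Finset.card_le_card h2
      rw [Nat.card_Icc] at this
      omega

lemma base_m (m t : ℕ) (hm : 1 ≤ m) :
    IsIntervalPartition (pp m t m)
      ((Finset.Icc 1 m).image
        (fun i => (Finset.Icc (t + i + 1) (t + m), (Finset.Icc (t + 1) (t + m)).erase (t + i)))) := by
  refine ⟨?_, ?_, ?_⟩
  · intro p hp
    simp only [mem_image] at hp
    obtain ⟨i, hi, rfl⟩ := hp
    simp only [mem_Icc] at hi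
    intro x hx
    simp only [mem_Icc] at hx
    exact Finset.mem_erase.2 ⟨by omega, by simp only [mem_Icc]; omega⟩
  · intro p hp q hq hpq X hX
    simp only [mem_image] at hp hq
    obtain ⟨i, hi, rfl⟩ := hp
    obtain ⟨j, hj, rfl⟩ := hq
    simp only [mem_Icc] at hi hj
    rcases Nat.lt_trichotomy i j with h | h | h
    · -- t+j ∈ X via first interval's bottom, but excluded by second's top
      have h1 : t + j ∈ X := hX.1.1 (by simp only [mem_Icc]; omega)
      exact (Finset.mem_erase.1 (hX.2.2 h1)).1 rfl
    · exact hpq (by rw [h])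
    · have h1 : t + i ∈ X := hX.2.1 (by simp only [mem_Icc]; omega)
      exact (Finset.mem_erase.1 (hX.1.2 h1)).1 rfl
  · intro X
    constructor
    · rintro ⟨hsub, hnc⟩
      have hne : ∃ y ∈ Finset.Icc (t + 1) (t + m), y ∉ X := by
        by_contra hc
        push_neg at hc
        exact hnc ⟨t + 1, fun l hl => hc (t + 1 + l) (by simp only [mem_Icc]; omega)⟩
      obtain ⟨y, hy, hyX⟩ := hne
      simp only [mem_Icc] at hy
      have hF : ((Finset.Icc 1 m).filter (fun i => t + i ∉ X)).Nonempty :=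
        ⟨y - t, by simp only [mem_filter, mem_Icc]
                   constructor
                   · omega
                   · rwa [show t + (y - t) = y by omega]⟩
      set i := ((Finset.Icc 1 m).filter (fun i => t + i ∉ X)).max' hF with hidef
      have hiF := ((Finset.Icc 1 m).filter (fun i => t + i ∉ X)).max'_mem hF
      simp only [mem_filter, mem_Icc] at hiF
      refine ⟨(Finset.Icc (t + i + 1) (t + m), (Finset.Icc (t + 1) (t + m)).erase (t + i)),
        Finset.mem_image.2 ⟨i, by simp only [mem_Icc]; omega, rfl⟩, ?_, ?_⟩
      · intro x hx
        simp only [mem_Icc] at hx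
        by_contra hxX
        have : x - t ≤ i := Finset.le_max' _ _ (by
          simp only [mem_filter, mem_Icc]
          refine ⟨⟨by omega, by omega⟩, ?_⟩
          rwa [show t + (x - t) = x by omega])
        omega
      · intro x hx
        exact Finset.mem_erase.2 ⟨fun h => hiF.2 (h ▸ hx), hsub hx⟩
    · rintro ⟨p, hp, hX1, hX2⟩
      simp only [mem_image] at hp
      obtain ⟨i, hi, rfl⟩ := hp
      simp only [mem_Icc] at hi
      have hsub : X ⊆ Finset.Icc (t + 1) (t + m) := fun x hx =>
        (Finset.mem_erase.1 (hX2 hx)).2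
      refine ⟨hsub, ?_⟩
      rintro ⟨i', hi'⟩
      have h0 : i' ∈ X := by have := hi' 0 (by omega); simpa using this
      have h0' := hsub h0
      simp only [mem_Icc] at h0'
      have hm1 : i' + (m - 1) ∈ X := hi' (m - 1) (by omega)
      have hm1' := hsub hm1
      simp only [mem_Icc] at hm1'
      have hieq : i' = t + 1 := by omega
      have : t + i ∈ X := by
        have := hi' (i - 1) (by omega)
        rwa [show i' + (i - 1) = t + i by omega] at this
      exact (Finset.mem_erase.1 (hX2 this)).1 rfl
-- class equality lemmas
lemma Cnone_eq (m t k : ℕ) (hm : 1 ≤ m) (hk : m + 1 ≤ k) :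
    {X | X ∈ pp m t k ∧ t + m + 1 ∉ X} =
    Cglue (Finset.Icc (t + 1) (t + m)) (Finset.Icc (t + m + 2) (t + m + 1 + (k - m - 1))) ∅
      (pp m t m) (pp m (t + m + 1) (k - m - 1)) := by
  ext X
  simp only [Set.mem_setOf_eq, Cglue, pp]
  constructor
  · rintro ⟨⟨hsub, hnc⟩, hc⟩
    refine ⟨Finset.empty_subset _, ?_, ⟨Finset.inter_subset_right, ?_⟩,
      ⟨Finset.inter_subset_right, ?_⟩⟩
    · intro x hx
      have := hsub hx
      simp only [mem_Icc] at this
      simp only [mem_union, mem_Icc, Finset.notMem_empty]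
      have hxc : x ≠ t + m + 1 := fun h => hc (h ▸ hx)
      omega
    · exact fun hcon => hnc (hasConsec_mono Finset.inter_subset_left hcon)
    · exact fun hcon => hnc (hasConsec_mono Finset.inter_subset_left hcon)
  · rintro ⟨-, hsub, ⟨-, hncU⟩, ⟨-, hncV⟩⟩
    have hXsub : X ⊆ Finset.Icc (t + 1) (t + k) := by
      intro x hx
      have := hsub hx
      simp only [mem_union, mem_Icc, Finset.notMem_empty, or_false] at this
      simp only [mem_Icc]
      omega
    have hcX : t + m + 1 ∉ X := by
      intro h
      have := hsub h
      simp only [mem_union, mem_Icc, Finset.notMem_empty, or_false] at this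
      omega
    refine ⟨⟨hXsub, ?_⟩, hcX⟩
    rintro ⟨i, hi⟩
    have h0 : i ∈ X := by have := hi 0 (by omega); simpa using this
    have h0' := hXsub h0
    simp only [mem_Icc] at h0'
    have hm1 : i + (m - 1) ∈ X := hi (m - 1) (by omega)
    have hm1' := hXsub hm1
    simp only [mem_Icc] at hm1'
    rcases le_or_gt (i + m) (t + m + 1) with hcase | hcase
    · -- run inside U
      exact hncU ⟨i, fun l hl => Finset.mem_inter.2
        ⟨hi l hl, by simp only [mem_Icc]; omega⟩⟩
    · rcases le_or_gt (t + m + 2) i with hcase2 | hcase2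
      · exact hncV ⟨i, fun l hl => Finset.mem_inter.2
          ⟨hi l hl, by simp only [mem_Icc]; omega⟩⟩
      · -- c in run
        have : i + (t + m + 1 - i) ∈ X := hi (t + m + 1 - i) (by omega)
        rw [show i + (t + m + 1 - i) = t + m + 1 by omega] at this
        exact hcX this
  
lemma Csome_eq (m t k a b : ℕ) (hm : 1 ≤ m) (hk : m + 1 ≤ k)
    (hab : a + b + 2 ≤ m) (hb : b + m + 1 ≤ k) :
    {X | X ∈ pp m t k ∧ Finset.Icc (t + m + 1 - a) (t + m + 1 + b) ⊆ X ∧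
      t + m - a ∉ X ∧ t + m + b + 2 ∉ X} =
    Cglue (Finset.Icc (t + 1) (t + (m - 1 - a)))
      (Finset.Icc (t + m + b + 3) (t + m + b + 2 + (k - m - b - 2)))
      (Finset.Icc (t + m + 1 - a) (t + m + 1 + b))
      (pp m t (m - 1 - a)) (pp m (t + m + b + 2) (k - m - b - 2)) := by
  ext X
  simp only [Set.mem_setOf_eq, Cglue, pp]
  constructor
  · rintro ⟨⟨hsub, hnc⟩, hK, hg1, hg2⟩
    refine ⟨hK, ?_, ⟨Finset.inter_subset_right, ?_⟩, ⟨Finset.inter_subset_right, ?_⟩⟩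
    · intro x hx
      have := hsub hx
      simp only [mem_Icc] at this
      have hx1 : x ≠ t + m - a := fun h => hg1 (h ▸ hx)
      have hx2 : x ≠ t + m + b + 2 := fun h => hg2 (h ▸ hx)
      simp only [mem_union, mem_Icc]
      omega
    · exact fun hcon => hnc (hasConsec_mono Finset.inter_subset_left hcon)
    · exact fun hcon => hnc (hasConsec_mono Finset.inter_subset_left hcon)
  · rintro ⟨hK, hsub, ⟨-, hncU⟩, ⟨-, hncV⟩⟩
    have hXsub : X ⊆ Finset.Icc (t + 1) (t + k) := by
      intro x hx
      have := hsub hx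
      simp only [mem_union, mem_Icc] at this
      simp only [mem_Icc]
      omega
    have hg1 : t + m - a ∉ X := by
      intro h
      have := hsub h
      simp only [mem_union, mem_Icc] at this
      omega
    have hg2 : t + m + b + 2 ∉ X := by
      intro h
      have := hsub h
      simp only [mem_union, mem_Icc] at this
      omega
    refine ⟨⟨hXsub, ?_⟩, hK, hg1, hg2⟩
    rintro ⟨i, hi⟩
    have h0 : i ∈ X := by have := hi 0 (by omega); simpa using this
    have h0' := hXsub h0
    simp only [mem_Icc] at h0'
    have hm1 : i + (m - 1) ∈ X := hi (m - 1) (by omega)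
    have hm1' := hXsub hm1
    simp only [mem_Icc] at hm1'
    rcases le_or_gt (i + m) (t + m - a) with hcase | hcase
    · exact hncU ⟨i, fun l hl => Finset.mem_inter.2
        ⟨hi l hl, by simp only [mem_Icc]; omega⟩⟩
    · rcases le_or_gt (t + m + b + 3) i with hcase2 | hcase2
      · exact hncV ⟨i, fun l hl => Finset.mem_inter.2
          ⟨hi l hl, by simp only [mem_Icc]; omega⟩⟩
      · -- run meets the middle zone [t+m-a, t+m+b+2]
        rcases le_or_gt i (t + m - a) with hc3 | hc3
        · -- gap g1 in run
          have : i + (t + m - a - i) ∈ X := hi (t + m - a - i) (by omega)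
          rw [show i + (t + m - a - i) = t + m - a by omega] at this
          exact hg1 this
        · rcases le_or_gt (t + m + b + 2) (i + m - 1) with hc4 | hc4
          · have : i + (t + m + b + 2 - i) ∈ X := hi (t + m + b + 2 - i) (by omega)
            rw [show i + (t + m + b + 2 - i) = t + m + b + 2 by omega] at this
            exact hg2 this
          · -- run inside K, cardinality contradiction
            have hrun : ∀ l < m, i + l ∈ Finset.Icc (t + m + 1 - a) (t + m + 1 + b) := by
              intro l hl
              simp only [mem_Icc]
              omega
            have := run_card hrun
            rw [Nat.card_Icc] at this
            omega
lemma lower (m : ℕ) (hm : 1 ≤ m) : ∀ k t : ℕ, ∃ Pp : Finset (Finset ℕ × Finset ℕ),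
    IsIntervalPartition (pp m t k) Pp ∧ ∀ p ∈ Pp, dd m k ≤ p.2.card := by
  intro k
  induction k using Nat.strong_induction_on with
  | _ k ih =>
  intro t
  rcases lt_or_ge k m with hk | hk
  · refine ⟨{(∅, Finset.Icc (t + 1) (t + k))}, base_small m t k hm hk, ?_⟩
    intro p hp
    simp only [mem_singleton] at hp
    subst hp
    have h1 := dd_le_self m k
    simp only [Nat.card_Icc]
    omega
  rcases eq_or_lt_of_le hk with hk' | hk'
  · subst hk'
    refine ⟨_, base_m m t hm, ?_⟩
    intro p hp
    simp only [mem_image] at hp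
    obtain ⟨i, hi, rfl⟩ := hp
    simp only [mem_Icc] at hi
    have hc : (t + i) ∈ Finset.Icc (t + 1) (t + m) := by simp only [mem_Icc]; omega
    have := Finset.card_erase_of_mem hc
    simp only [this, Nat.card_Icc, dd_m m hm]
    omega
  · -- induction step : m + 1 ≤ k
    choose Ppf hPpf using ih
    have hltm : m < k := hk'
    have hlt1 : ∀ a : ℕ, m - 1 - a < k := fun a => by omega
    have hlt2 : ∀ b : ℕ, k - m - b - 2 < k := fun b => by omega
    classical
    set PC : Option (ℕ × ℕ) → Finset (Finset ℕ × Finset ℕ) := fun i =>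
      match i with
      | none => ((Ppf m hltm t) ×ˢ (Ppf (k - m - 1) (by omega) (t + m + 1))).image
          (fun q => (q.1.1 ∪ q.2.1 ∪ ∅, q.1.2 ∪ q.2.2 ∪ ∅))
      | some ab =>
          ((Ppf (m - 1 - ab.1) (hlt1 ab.1) t) ×ˢ
            (Ppf (k - m - ab.2 - 2) (hlt2 ab.2) (t + m + ab.2 + 2))).image
          (fun q => (q.1.1 ∪ q.2.1 ∪ Finset.Icc (t + m + 1 - ab.1) (t + m + 1 + ab.2),
                     q.1.2 ∪ q.2.2 ∪ Finset.Icc (t + m + 1 - ab.1) (t + m + 1 + ab.2)))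
      with hPCdef
    set C : Option (ℕ × ℕ) → Set (Finset ℕ) := fun i =>
      match i with
      | none => {X | X ∈ pp m t k ∧ t + m + 1 ∉ X}
      | some ab => {X | X ∈ pp m t k ∧
          Finset.Icc (t + m + 1 - ab.1) (t + m + 1 + ab.2) ⊆ X ∧
          t + m - ab.1 ∉ X ∧ t + m + ab.2 + 2 ∉ X}
      with hCdef
    set ι : Finset (Option (ℕ × ℕ)) := insert none
      ((((Finset.range m) ×ˢ (Finset.range k)).filter
        (fun ab => ab.1 + ab.2 + 2 ≤ m ∧ ab.2 + m + 1 ≤ k)).image some) with hιdef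
    -- glue data for class none
    have gluenone := glue (U := Finset.Icc (t + 1) (t + m))
        (V := Finset.Icc (t + m + 2) (t + m + 1 + (k - m - 1))) (K := ∅)
        (hPpf m hltm t).1 (hPpf (k - m - 1) (by omega) (t + m + 1)).1
        (fun S hS => hS.1) (fun S hS => hS.1)
        (Finset.disjoint_left.2 (by intro x h1 h2; simp only [mem_Icc] at h1 h2; omega))
        (Finset.disjoint_empty_right _) (Finset.disjoint_empty_right _)
    -- glue data for classes some (a, b)
    have gluesome : ∀ a b : ℕ, a + b + 2 ≤ m → b + m + 1 ≤ k →
        IsIntervalPartition (C (some (a, b))) (PC (some (a, b))) ∧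
        (∀ p ∈ PC (some (a, b)), ∃ pa ∈ Ppf (m - 1 - a) (hlt1 a) t,
          ∃ pb ∈ Ppf (k - m - b - 2) (hlt2 b) (t + m + b + 2),
          p.2.card = pa.2.card + pb.2.card + (Finset.Icc (t + m + 1 - a) (t + m + 1 + b)).card) := by
      intro a b hab hb
      have hg := glue (U := Finset.Icc (t + 1) (t + (m - 1 - a)))
        (V := Finset.Icc (t + m + b + 3) (t + m + b + 2 + (k - m - b - 2)))
        (K := Finset.Icc (t + m + 1 - a) (t + m + 1 + b))
        (hPpf (m - 1 - a) (hlt1 a) t).1 (hPpf (k - m - b - 2) (hlt2 b) (t + m + b + 2)).1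
        (fun S hS => hS.1) (fun S hS => hS.1)
        (Finset.disjoint_left.2 (by intro x h1 h2; simp only [mem_Icc] at h1 h2; omega))
        (Finset.disjoint_left.2 (by intro x h1 h2; simp only [mem_Icc] at h1 h2; omega))
        (Finset.disjoint_left.2 (by intro x h1 h2; simp only [mem_Icc] at h1 h2; omega))
      constructor
      · show IsIntervalPartition {X | X ∈ pp m t k ∧
          Finset.Icc (t + m + 1 - a) (t + m + 1 + b) ⊆ X ∧
          t + m - a ∉ X ∧ t + m + b + 2 ∉ X} _
        rw [Csome_eq m t k a b hm (by omega) hab hb]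
        exact hg.1
      · exact hg.2
    -- local partitions
    have hloc : ∀ i ∈ ι, IsIntervalPartition (C i) (PC i) := by
      intro i hi
      simp only [hιdef, Finset.mem_insert, Finset.mem_image, Finset.mem_filter,
        Finset.mem_product, Finset.mem_range] at hi
      rcases hi with rfl | ⟨⟨a, b⟩, ⟨⟨-, -⟩, hab, hb⟩, rfl⟩
      · show IsIntervalPartition {X | X ∈ pp m t k ∧ t + m + 1 ∉ X} _
        rw [Cnone_eq m t k hm (by omega)]
        exact gluenone.1
      · exact (gluesome a b hab hb).1
    -- classes are disjoint
    have hdisj : ∀ i ∈ ι, ∀ j ∈ ι, i ≠ j → ∀ X, X ∈ C i → X ∈ C j → False := by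
      have hcmem : ∀ a b : ℕ, ∀ X, X ∈ C (some (a, b)) → t + m + 1 ∈ X := by
        intro a b X hX
        exact hX.2.1 (by simp only [mem_Icc]; omega)
      have hkey : ∀ a b a' b' : ℕ, a < a' → ∀ X, X ∈ C (some (a, b)) →
          X ∈ C (some (a', b')) → False := by
        intro a b a' b' hlt X hX hX'
        exact hX.2.2.1 (hX'.2.1 (by simp only [mem_Icc]; omega))
      have hkey2 : ∀ a b a' b' : ℕ, b < b' → ∀ X, X ∈ C (some (a, b)) →
          X ∈ C (some (a', b')) → False := by
        intro a b a' b' hlt X hX hX'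
        exact hX.2.2.2 (hX'.2.1 (by simp only [mem_Icc]; omega))
      intro i _ j _ hij X hXi hXj
      match i, j with
      | none, none => exact hij rfl
      | none, some (a, b) => exact hXi.2 (hcmem a b X hXj)
      | some (a, b), none => exact hXj.2 (hcmem a b X hXi)
      | some (a, b), some (a', b') =>
        rcases Nat.lt_trichotomy a a' with h | rfl | h
        · exact hkey a b a' b' h X hXi hXj
        · rcases Nat.lt_trichotomy b b' with h | rfl | h
          · exact hkey2 a b a b' h X hXi hXj
          · exact hij rfl
          · exact hkey2 a b' a b h X hXj hXi
        · exact hkey a' b' a b h X hXj hXi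
    -- coverage of the classes
    have hcov : ∀ X, X ∈ pp m t k ↔ ∃ i ∈ ι, X ∈ C i := by
      intro X
      constructor
      · intro hX
        by_cases hc : t + m + 1 ∈ X
        · -- the run through t+m+1
          have htX : t ∉ X := fun h => by
            have := hX.1 h; simp only [mem_Icc] at this; omega
          have htk1X : t + k + 1 ∉ X := fun h => by
            have := hX.1 h; simp only [mem_Icc] at this; omega
          have hF0 : ((Finset.Icc t (t + m)).filter (· ∉ X)).Nonempty :=
            ⟨t, by simp only [mem_filter, mem_Icc]; exact ⟨⟨le_refl t, by omega⟩, htX⟩⟩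
          have hF1 : ((Finset.Icc (t + m + 2) (t + k + 1)).filter (· ∉ X)).Nonempty :=
            ⟨t + k + 1, by simp only [mem_filter, mem_Icc]; exact ⟨⟨by omega, le_refl _⟩, htk1X⟩⟩
          set j0 := ((Finset.Icc t (t + m)).filter (· ∉ X)).max' hF0 with hj0def
          set j1 := ((Finset.Icc (t + m + 2) (t + k + 1)).filter (· ∉ X)).min' hF1 with hj1def
          have hj0mem := ((Finset.Icc t (t + m)).filter (· ∉ X)).max'_mem hF0
          have hj1mem := ((Finset.Icc (t + m + 2) (t + k + 1)).filter (· ∉ X)).min'_mem hF1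
          simp only [mem_filter, mem_Icc] at hj0mem hj1mem
          rw [← hj0def] at hj0mem
          rw [← hj1def] at hj1mem
          have hj0max : ∀ x, j0 < x → x ≤ t + m → x ∈ X := by
            intro x h1 h2
            by_contra hxX
            have : x ≤ j0 := Finset.le_max' _ _ (by
              simp only [mem_filter, mem_Icc]; exact ⟨⟨by omega, h2⟩, hxX⟩)
            omega
          have hj1min : ∀ x, t + m + 2 ≤ x → x < j1 → x ∈ X := by
            intro x h1 h2
            by_contra hxX
            have : j1 ≤ x := Finset.min'_le _ _ (by
              simp only [mem_filter, mem_Icc]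
              exact ⟨⟨h1, by omega⟩, hxX⟩)
            omega
          -- the run around t+m+1 is Icc (j0+1) (j1-1)
          have hrun : ∀ x, j0 < x → x < j1 → x ∈ X := by
            intro x h1 h2
            rcases le_or_gt x (t + m) with h | h
            · exact hj0max x h1 h
            · rcases le_or_gt (t + m + 2) x with h' | h'
              · exact hj1min x h' h2
              · have : x = t + m + 1 := by omega
                rwa [this]
          set a := t + m - j0 with hadef
          set b := j1 - (t + m + 2) with hbdef
          -- the run has length < m
          have hlen : a + b + 2 ≤ m := by
            by_contra hcon
            push_neg at hcon
            refine hX.2 ⟨j0 + 1, fun l hl => hrun (j0 + 1 + l) (by omega) (by omega)⟩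
          refine ⟨some (a, b), ?_, hX, ?_, ?_, ?_⟩
          · simp only [hιdef, Finset.mem_insert, Finset.mem_image, Finset.mem_filter,
              Finset.mem_product, Finset.mem_range]
            exact Or.inr ⟨(a, b), ⟨⟨by omega, by omega⟩, by omega, by omega⟩, rfl⟩
          · intro x hx
            simp only [mem_Icc] at hx
            exact hrun x (by omega) (by omega)
          · rw [show t + m - a = j0 by omega]
            exact hj0mem.2
          · rw [show t + m + b + 2 = j1 by omega]
            exact hj1mem.2
        · exact ⟨none, Finset.mem_insert_self _ _, hX, hc⟩
      · rintro ⟨i, hi, hXi⟩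
        match i with
        | none => exact hXi.1
        | some ab => exact hXi.1
    refine ⟨ι.biUnion PC, assemble hdisj hcov hloc, ?_⟩
    intro p hp
    obtain ⟨i, hi, hpi⟩ := Finset.mem_biUnion.1 hp
    simp only [hιdef, Finset.mem_insert, Finset.mem_image, Finset.mem_filter,
      Finset.mem_product, Finset.mem_range] at hi
    rcases hi with rfl | ⟨⟨a, b⟩, ⟨⟨-, -⟩, hab, hb⟩, rfl⟩
    · obtain ⟨pa, hpa, pb, hpb, hcard⟩ := gluenone.2 p hpi
      have h1 := (hPpf m hltm t).2 pa hpa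
      have h2 := (hPpf (k - m - 1) (by omega : k - m - 1 < k) (t + m + 1)).2 pb hpb
      have e1 := dd_m m hm
      have e2 := dd_step m k hm (by omega)
      simp only [Finset.card_empty] at hcard
      omega
    · obtain ⟨pa, hpa, pb, hpb, hcard⟩ := (gluesome a b hab hb).2 p hpi
      have h1 := (hPpf (m - 1 - a) (hlt1 a) t).2 pa hpa
      have h2 := (hPpf (k - m - b - 2) (hlt2 b) (t + m + b + 2)).2 pb hpb
      rw [Nat.card_Icc] at hcard
      have e1 := dd_small m hm (m - 1 - a) (by omega)
      rcases le_or_gt (m + b + 2) k with hcase | hcase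
      · have e2 := dd_gap m k (k - m - b - 2) (m + b + 2) hm (by omega) (by omega)
        omega
      · have e3 := dd_small m hm 0 (by omega)
        have e4 := dd_lt_self m k hm (by omega)
        have e5 : k - m - b - 2 = 0 := by omega
        rw [e5] at h2
        omega
section upperbound

def sig (n m : ℕ) : Finset ℕ :=
  (Finset.Icc 1 n).filter (fun x => 2 ≤ x % (m + 1) ∨ (n + 1) / (m + 1) * (m + 1) < x)

lemma no_mult {n m x : ℕ} (hx0 : (m + 1) ∣ x) (hxn : x ≤ n)
    (hq : (n + 1) / (m + 1) * (m + 1) < x) : False := by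
  obtain ⟨j, rfl⟩ := hx0
  have hdm := Nat.div_add_mod (n + 1) (m + 1)
  have hmod : (n + 1) % (m + 1) < m + 1 := Nat.mod_lt _ (by omega)
  have hcomm : (m + 1) * ((n + 1) / (m + 1)) = (n + 1) / (m + 1) * (m + 1) := Nat.mul_comm _ _
  have hqj : (n + 1) / (m + 1) + 1 ≤ j := by
    by_contra hc
    push_neg at hc
    have h4 : (m + 1) * j ≤ (m + 1) * ((n + 1) / (m + 1)) := Nat.mul_le_mul_left _ (by omega)
    omega
  have h5 : (m + 1) * ((n + 1) / (m + 1) + 1) ≤ (m + 1) * j := Nat.mul_le_mul_left _ hqj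
  have hexp : (m + 1) * ((n + 1) / (m + 1) + 1) = (m + 1) * ((n + 1) / (m + 1)) + (m + 1) := by
    ring
  omega

lemma sig_nc (n m : ℕ) (hm : 1 ≤ m) : ¬ HasConsec m (sig n m) := by
  rintro ⟨i, hi⟩
  have hmem : ∀ l < m, i + l ∈ Finset.Icc 1 n ∧
      (2 ≤ (i + l) % (m + 1) ∨ (n + 1) / (m + 1) * (m + 1) < i + l) := by
    intro l hl
    have := hi l hl
    simp only [sig, mem_filter] at this
    exact this
  have hdm := Nat.div_add_mod i (m + 1)
  have hrlt : i % (m + 1) < m + 1 := Nat.mod_lt _ (by omega)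
  set r := i % (m + 1) with hrdef
  rcases Nat.lt_trichotomy r 1 with hr | hr | hr
  · -- r = 0 : i is a multiple
    have h0 := hmem 0 (by omega)
    simp only [mem_Icc, add_zero] at h0
    rcases h0.2 with h | h
    · omega
    · exact no_mult ⟨i / (m + 1), by omega⟩ h0.1.2 h
  · -- r = 1 : i > q(m+1)
    have h0 := hmem 0 (by omega)
    simp only [mem_Icc, add_zero] at h0
    have hq : (n + 1) / (m + 1) * (m + 1) < i := by
      rcases h0.2 with h | h
      · omega
      · exact h
    have hend := hmem (m - 1) (by omega)
    simp only [mem_Icc] at hend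
    have hdm2 := Nat.div_add_mod (n + 1) (m + 1)
    have hmod2 : (n + 1) % (m + 1) < m + 1 := Nat.mod_lt _ (by omega)
    have hcomm : (m + 1) * ((n + 1) / (m + 1)) = (n + 1) / (m + 1) * (m + 1) :=
      Nat.mul_comm _ _
    have := hend.1.2
    omega
  · -- r ≥ 2 : i + (m + 1 - r) is a multiple inside the run
    have hl : m + 1 - r < m := by omega
    have h0 := hmem (m + 1 - r) hl
    simp only [mem_Icc] at h0
    have hexp : (m + 1) * (i / (m + 1) + 1) = (m + 1) * (i / (m + 1)) + (m + 1) := by ring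
    have heq : i + (m + 1 - r) = (m + 1) * (i / (m + 1) + 1) := by omega
    rcases h0.2 with h | h
    · rw [heq, Nat.mul_mod_right] at h
      omega
    · exact no_mult ⟨i / (m + 1) + 1, heq⟩ h0.1.2 h

lemma sig_max (n m x : ℕ) (hm : 1 ≤ m) (hx : x ∈ Finset.Icc 1 n) (hxs : x ∉ sig n m) :
    HasConsec m (insert x (sig n m)) := by
  simp only [mem_Icc] at hx
  simp only [sig, mem_filter, mem_Icc, not_and, not_or, not_lt, not_le] at hxs
  obtain ⟨hr, hQ⟩ := hxs ⟨hx.1, hx.2⟩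
  have hdm := Nat.div_add_mod x (m + 1)
  have hrlt : x % (m + 1) < m + 1 := Nat.mod_lt _ (by omega)
  set r := x % (m + 1) with hrdef
  set d := x / (m + 1) with hddef
  have hdm2 := Nat.div_add_mod (n + 1) (m + 1)
  have hmod2 : (n + 1) % (m + 1) < m + 1 := Nat.mod_lt _ (by omega)
  have hcomm : (m + 1) * ((n + 1) / (m + 1)) = (n + 1) / (m + 1) * (m + 1) := Nat.mul_comm _ _
  interval_cases r
  · -- r = 0 : fill downwards, run = [x-m+1, x]
    have hd1 : 1 ≤ d := by
      rcases Nat.eq_zero_or_pos d with h | h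
      · have h0 : (m + 1) * d = 0 := by rw [h]; ring
        omega
      · exact h
    refine ⟨x - (m - 1), fun l hl => ?_⟩
    rcases eq_or_lt_of_le (show l ≤ m - 1 by omega) with hlm | hlm
    · have hmul : m + 1 ≤ (m + 1) * d := Nat.le_mul_of_pos_right _ hd1
      have h6 : x - (m - 1) + l = x := by omega
      rw [h6]
      exact Finset.mem_insert_self _ _
    · -- l < m - 1
      apply Finset.mem_insert_of_mem
      simp only [sig, mem_filter, mem_Icc]
      have hmul : m + 1 ≤ (m + 1) * d := Nat.le_mul_of_pos_right _ hd1
      have hexp2 : (m + 1) * (d - 1) + (m + 1) = (m + 1) * d := by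
        rw [← Nat.mul_succ]
        congr 1
        omega
      have hyeq : x - (m - 1) + l = (m + 1) * (d - 1) + (m + 1 - (m - 1 - l)) := by omega
      refine ⟨⟨by omega, by omega⟩, Or.inl ?_⟩
      rw [hyeq, Nat.mul_add_mod, Nat.mod_eq_of_lt (by omega)]
      omega
  · -- r = 1 : fill upwards, run = [x, x+m-1]
    have hqd : d + 1 ≤ (n + 1) / (m + 1) := by
      by_contra hc
      push_neg at hc
      have h4 : (m + 1) * ((n + 1) / (m + 1)) ≤ (m + 1) * d := Nat.mul_le_mul_left _ (by omega)
      omega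
    have h5 : (m + 1) * (d + 1) ≤ (m + 1) * ((n + 1) / (m + 1)) := Nat.mul_le_mul_left _ hqd
    have hexp : (m + 1) * (d + 1) = (m + 1) * d + (m + 1) := by ring
    refine ⟨x, fun l hl => ?_⟩
    rcases Nat.eq_zero_or_pos l with rfl | hl1
    · rw [add_zero]
      exact Finset.mem_insert_self _ _
    · apply Finset.mem_insert_of_mem
      simp only [sig, mem_filter, mem_Icc]
      refine ⟨⟨by omega, by omega⟩, Or.inl ?_⟩
      rw [show x + l = (m + 1) * d + (1 + l) by omega, Nat.mul_add_mod,
        Nat.mod_eq_of_lt (by omega)]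
      omega

end upperbound

lemma sig_card (n m : ℕ) (hm : 1 ≤ m) :
    (sig n m).card + (n + 1) / (m + 1) + (n + m + 1) / (m + 1) ≤ n + 1 := by
  classical
  set p : ℕ → Prop := fun x => 2 ≤ x % (m + 1) ∨ (n + 1) / (m + 1) * (m + 1) < x with hpdef
  have hsplit := Finset.card_filter_add_card_filter_not
    (s := Finset.Icc 1 n) (p := p)
  have hIcc : (Finset.Icc 1 n).card = n := by rw [Nat.card_Icc]; omega
  set A := (Finset.Icc 1 n).filter (fun x => (m + 1) ∣ x) with hAdef
  set B := (Finset.range ((n + 1) / (m + 1))).image (fun j => j * (m + 1) + 1) with hBdef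
  have hQle : (n + 1) / (m + 1) * (m + 1) ≤ n + 1 := Nat.div_mul_le_self _ _
  have hAsub : A ⊆ (Finset.Icc 1 n).filter (fun x => ¬ p x) := by
    intro x hx
    simp only [hAdef, mem_filter, mem_Icc] at hx
    obtain ⟨⟨hx1, hx2⟩, hdvd⟩ := hx
    simp only [mem_filter, mem_Icc, hpdef, not_or, not_le, not_lt]
    refine ⟨⟨hx1, hx2⟩, ?_, ?_⟩
    · obtain ⟨j, rfl⟩ := hdvd
      rw [Nat.mul_mod_right]
      omega
    · by_contra hc
      push_neg at hc
      exact no_mult hdvd hx2 hc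
  have hBsub : B ⊆ (Finset.Icc 1 n).filter (fun x => ¬ p x) := by
    intro x hx
    simp only [hBdef, mem_image, mem_range] at hx
    obtain ⟨j, hj, rfl⟩ := hx
    have h5 : (j + 1) * (m + 1) ≤ (n + 1) / (m + 1) * (m + 1) :=
      Nat.mul_le_mul_right _ (by omega)
    have hexp : (j + 1) * (m + 1) = j * (m + 1) + (m + 1) := by ring
    have hmod : (j * (m + 1) + 1) % (m + 1) = 1 := by
      rw [add_comm, Nat.add_mul_mod_self_right, Nat.mod_eq_of_lt (by omega)]
    simp only [mem_filter, mem_Icc, hpdef, not_or, not_le, not_lt]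
    exact ⟨⟨by omega, by omega⟩, by omega, by omega⟩
  have hABdisj : Disjoint A B := by
    rw [Finset.disjoint_left]
    intro x hxA hxB
    simp only [hAdef, mem_filter] at hxA
    simp only [hBdef, mem_image, mem_range] at hxB
    obtain ⟨j, hj, rfl⟩ := hxB
    obtain ⟨j', hj'⟩ := hxA.2
    have hmod : (j * (m + 1) + 1) % (m + 1) = 1 := by
      rw [add_comm, Nat.add_mul_mod_self_right, Nat.mod_eq_of_lt (by omega)]
    rw [hj', Nat.mul_mod_right] at hmod
    omega
  have hcardA : A.card = n / (m + 1) := by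
    rw [hAdef, show Finset.Icc 1 n = Finset.Ioc 0 n by rfl]
    exact Nat.Ioc_filter_dvd_card_eq_div n (m + 1)
  have hcardB : B.card = (n + 1) / (m + 1) := by
    rw [hBdef, Finset.card_image_of_injective _ (fun a b h => by
      have h2 : a * (m + 1) = b * (m + 1) := by omega
      exact Nat.eq_of_mul_eq_mul_right (by omega) h2), Finset.card_range]
  have hunion : A.card + B.card ≤ ((Finset.Icc 1 n).filter (fun x => ¬ p x)).card := by
    rw [← Finset.card_union_of_disjoint hABdisj]
    exact Finset.card_le_card (Finset.union_subset hAsub hBsub)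
  have hceil : (n + m + 1) / (m + 1) = n / (m + 1) + 1 := by
    rw [show n + m + 1 = n + (m + 1) by ring, Nat.add_div_right _ (by omega)]
  have hsig : (sig n m).card = ((Finset.Icc 1 n).filter p).card := rfl
  omega

lemma sig_mem (n m : ℕ) (hm : 1 ≤ m) : sig n m ∈ pathPoset n m :=
  ⟨Finset.filter_subset _ _, sig_nc n m hm⟩

lemma pathPoset_eq_pp (n m : ℕ) : pathPoset n m = pp m 0 n := by
  ext σ
  simp only [pathPoset, pp, Set.mem_setOf_eq, Nat.zero_add]

/-- The Stanley depth of the poset `P_{n,m}` equals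
`n + 1 − ⌊(n+1)/(m+1)⌋ − ⌈(n+1)/(m+1)⌉` (here `(n+1)/(m+1)` is the floor and
`(n+m+1)/(m+1)` the ceiling of `(n+1)/(m+1)`): there is an interval partition all
of whose upper sets `G` satisfy `|G| ≥` this value, and no partition does better. -/
theorem stmt_2 (n m : ℕ) (hm : 1 ≤ m) (hn : m ≤ n) :
    IsGreatest {d : ℕ | ∃ Pp : Finset (Finset ℕ × Finset ℕ),
        IsIntervalPartition (pathPoset n m) Pp ∧ ∀ p ∈ Pp, d ≤ p.2.card}
      (n + 1 - (n + 1) / (m + 1) - (n + m + 1) / (m + 1)) := by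
  constructor
  · -- membership : the partition from `lower`
    obtain ⟨Pp, hPp, hcard⟩ := lower m hm n 0
    rw [pathPoset_eq_pp]
    exact ⟨Pp, hPp, fun p hp => hcard p hp⟩
  · -- upper bound : via the maximal set sig
    rintro d' ⟨Pp, hPp, hd⟩
    obtain ⟨q, hq, hsub1, hsub2⟩ := (hPp.2.2 (sig n m)).1 (sig_mem n m hm)
    have hq2 : q.2 ∈ pathPoset n m := part_top_mem hPp hq
    have heq : q.2 = sig n m := by
      by_contra hne
      obtain ⟨x, hx2, hxs⟩ := Finset.exists_of_ssubset (ssubset_of_subset_of_ne hsub2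
        (fun h => hne h.symm))
      have hxIcc : x ∈ Finset.Icc 1 n := hq2.1 hx2
      have hcons := sig_max n m x hm hxIcc hxs
      have : insert x (sig n m) ⊆ q.2 := Finset.insert_subset hx2 hsub2
      exact hq2.2 (hasConsec_mono this hcons)
    have h1 : d' ≤ q.2.card := hd q hq
    rw [heq] at h1
    have h2 := sig_card n m hm
    have h3 := fc_sum m hm n
    omega
end

section
/- Let n ≥ m ≥ 1 be integers and let P_{n,m} = {σ ⊆ [n] : σ contains no m consecutive integers}. Then every partition of P_{n,m} into intervals [F_i,G_i] contains some interval with |G_i| ≤ n + 1 − ⌊(n+1)/(m+1)⌋ − ⌈(n+1)/(m+1)⌉; i.e., sdepth(P_{n,m}) ≤ n + 1 − ⌊(n+1)/(m+1)⌋ − ⌈(n+1)/(m+1)⌉. -/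
/-- Every interval partition of `P_{n,m}` contains an interval `[F,G]` with
`|G| ≤ n + 1 − ⌊(n+1)/(m+1)⌋ − ⌈(n+1)/(m+1)⌉`; i.e.
`sdepth(P_{n,m}) ≤ n + 1 − ⌊(n+1)/(m+1)⌋ − ⌈(n+1)/(m+1)⌉`. -/
theorem stmt_3 (n m : ℕ) (hm : 1 ≤ m) (hn : m ≤ n)
    (Pp : Finset (Finset ℕ × Finset ℕ)) (hPart : IsIntervalPartition (pathPoset n m) Pp) :
    ∃ p ∈ Pp, p.2.card ≤ n + 1 - (n + 1) / (m + 1) - (n + m + 1) / (m + 1) := by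
  set M := m + 1 with hM
  have hM0 : 0 < M := by omega
  -- the blocking set τ
  set τ : Finset ℕ := (Finset.Icc 1 n).filter (fun j => 2 ≤ j % M) with hτdef
  have hτP : τ ∈ pathPoset n m := by
    refine ⟨Finset.filter_subset _ _, ?_⟩
    rintro ⟨i, hi⟩
    by_cases h : i % M ≤ 1
    · have h0 := hi 0 hm
      rw [Nat.add_zero, hτdef, Finset.mem_filter] at h0
      have := h0.2
      omega
    · have hiM := Nat.mod_lt i hM0
      have hlt : M - i % M < m := by omega
      have h0 := hi (M - i % M) hlt
      rw [hτdef, Finset.mem_filter] at h0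
      have h2 := h0.2
      have hdm := Nat.div_add_mod i M
      have e : M * (i / M + 1) = M * (i / M) + M := by ring
      have he : i + (M - i % M) = M * (i / M + 1) := by omega
      rw [he, Nat.mul_mod_right] at h2
      omega
  -- the interval containing τ
  obtain ⟨p, hp, hpF, hpG⟩ := (hPart.2.2 τ).mp hτP
  refine ⟨p, hp, ?_⟩
  -- G := p.2 is itself in the poset
  have hGP : p.2 ∈ pathPoset n m :=
    (hPart.2.2 p.2).mpr ⟨p, hp, hPart.1 p hp, Finset.Subset.refl _⟩
  have hGn : p.2 ⊆ Finset.Icc 1 n := hGP.1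
  have hGc : ¬ HasConsec m p.2 := hGP.2
  -- the two families of forced holes
  set A0 : Finset ℕ := (Finset.Icc 1 (n / M)).image (fun k => k * M) with hA0def
  set A1 : Finset ℕ := (Finset.range ((n - m) / M + 1)).image (fun k => k * M + 1) with hA1def
  -- every element of A0 is missing from G
  have hA0 : ∀ j ∈ A0, j ∉ p.2 := by
    intro j hj hjG
    rw [hA0def, Finset.mem_image] at hj
    obtain ⟨k, hk, rfl⟩ := hj
    rw [Finset.mem_Icc] at hk
    obtain ⟨k', rfl⟩ : ∃ k', k = k' + 1 := ⟨k - 1, by omega⟩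
    have hkn : (k' + 1) * M ≤ n := (Nat.le_div_iff_mul_le hM0).mp hk.2
    have eM : (k' + 1) * M = M * k' + M := by ring
    apply hGc
    refine ⟨M * k' + 2, fun l hl => ?_⟩
    rcases Nat.lt_or_ge l (m - 1) with hlm | hlm
    · -- these elements lie in τ ⊆ G
      apply hpG
      rw [hτdef, Finset.mem_filter, Finset.mem_Icc]
      have e2 : M * k' + 2 + l = M * k' + (2 + l) := by ring
      rw [e2, Nat.mul_add_mod, Nat.mod_eq_of_lt (by omega : 2 + l < M)]
      omega
    · -- l = m - 1 : this element is j itself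
      have : M * k' + 2 + l = (k' + 1) * M := by omega
      rw [this]
      exact hjG
  -- every element of A1 is missing from G
  have hA1 : ∀ j ∈ A1, j ∉ p.2 := by
    intro j hj hjG
    rw [hA1def, Finset.mem_image] at hj
    obtain ⟨k, hk, rfl⟩ := hj
    rw [Finset.mem_range] at hk
    have hkn : k * M ≤ n - m := (Nat.le_div_iff_mul_le hM0).mp (by omega)
    apply hGc
    refine ⟨k * M + 1, fun l hl => ?_⟩
    rcases Nat.eq_zero_or_pos l with rfl | hl0
    · simpa using hjG
    · apply hpG
      rw [hτdef, Finset.mem_filter, Finset.mem_Icc]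
      have e2 : k * M + 1 + l = M * k + (1 + l) := by ring
      rw [e2, Nat.mul_add_mod, Nat.mod_eq_of_lt (by omega : 1 + l < M)]
      omega
  -- G avoids A0 ∪ A1 inside Icc 1 n
  have hsub : p.2 ⊆ (Finset.Icc 1 n) \ (A0 ∪ A1) := by
    intro x hx
    rw [Finset.mem_sdiff]
    refine ⟨hGn hx, fun hmem => ?_⟩
    rcases Finset.mem_union.mp hmem with h | h
    · exact hA0 x h hx
    · exact hA1 x h hx
  have hUsub : A0 ∪ A1 ⊆ Finset.Icc 1 n := by
    intro x hx
    rw [Finset.mem_Icc]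
    rcases Finset.mem_union.mp hx with h | h
    · rw [hA0def, Finset.mem_image] at h
      obtain ⟨k, hk, rfl⟩ := h
      rw [Finset.mem_Icc] at hk
      have hkn : k * M ≤ n := (Nat.le_div_iff_mul_le hM0).mp hk.2
      have : 1 * M ≤ k * M := Nat.mul_le_mul_right M hk.1
      omega
    · rw [hA1def, Finset.mem_image] at h
      obtain ⟨k, hk, rfl⟩ := h
      rw [Finset.mem_range] at hk
      have hkn : k * M ≤ n - m := (Nat.le_div_iff_mul_le hM0).mp (by omega)
      omega
  -- cardinalities
  have hdisj : Disjoint A0 A1 := by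
    rw [Finset.disjoint_left]
    intro a ha ha'
    rw [hA0def, Finset.mem_image] at ha
    rw [hA1def, Finset.mem_image] at ha'
    obtain ⟨k, _, rfl⟩ := ha
    obtain ⟨k', _, he⟩ := ha'
    have h1 : (k * M) % M = 0 := Nat.mul_mod_left k M
    have h2 : (k' * M + 1) % M = 1 := by
      have : k' * M + 1 = M * k' + 1 := by ring
      rw [this, Nat.mul_add_mod, Nat.mod_eq_of_lt (by omega : 1 < M)]
    rw [he] at h2
    omega
  have hc0 : A0.card = n / M := by
    rw [hA0def, Finset.card_image_of_injective _
      (fun a b h => Nat.eq_of_mul_eq_mul_right hM0 h), Nat.card_Icc]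
    exact Nat.add_sub_cancel _ _
  have hc1 : A1.card = (n - m) / M + 1 := by
    rw [hA1def, Finset.card_image_of_injective _
      (fun a b h => by
        have : a * M = b * M := by omega
        exact Nat.eq_of_mul_eq_mul_right hM0 this), Finset.card_range]
  have hcard : p.2.card ≤ n - (n / M + ((n - m) / M + 1)) := by
    have h1 := Finset.card_le_card hsub
    rw [Finset.card_sdiff_of_subset hUsub, Finset.card_union_of_disjoint hdisj, hc0, hc1,
      Nat.card_Icc] at h1
    omega
  -- arithmetic: compute all divisions in terms of q' and r
  set q : ℕ := (n + 1) / M with hq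
  set r : ℕ := (n + 1) % M with hr
  have hdm : M * q + r = n + 1 := Nat.div_add_mod (n + 1) M
  have hrM : r < M := Nat.mod_lt _ hM0
  have hq1 : 1 ≤ q := by
    by_contra h
    push_neg at h
    interval_cases q
    omega
  obtain ⟨q', hq'⟩ : ∃ q', q = q' + 1 := ⟨q - 1, by omega⟩
  have e2 : M * q = M * q' + M := by rw [hq']; ring
  rcases Nat.eq_zero_or_pos r with hr0 | hr1
  · -- r = 0 : n = M*q' + m
    have en : n = M * q' + m := by omega
    have d1 : n / M = q' := by
      rw [en, Nat.mul_add_div hM0, Nat.div_eq_of_lt (by omega : m < M)]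
      omega
    have d2 : (n - m) / M = q' := by
      have : n - m = M * q' := by omega
      rw [this, Nat.mul_div_cancel_left _ hM0]
    have d3 : (n + m + 1) / M = q' + 1 := by
      have e3 : M * (q' + 1) = M * q' + M := by ring
      have : n + m + 1 = M * (q' + 1) + m := by omega
      rw [this, Nat.mul_add_div hM0, Nat.div_eq_of_lt (by omega : m < M)]
    rw [d3]
    omega
  · -- r ≥ 1
    have d1 : n / M = q' + 1 := by
      have e3 : M * (q' + 1) = M * q' + M := by ring
      have : n = M * (q' + 1) + (r - 1) := by omega
      rw [this, Nat.mul_add_div hM0, Nat.div_eq_of_lt (by omega : r - 1 < M)]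
    have d2 : (n - m) / M = q' := by
      have : n - m = M * q' + r := by omega
      rw [this, Nat.mul_add_div hM0, Nat.div_eq_of_lt (by omega : r < M)]
      omega
    have d3 : (n + m + 1) / M = q' + 2 := by
      have e3 : M * (q' + 2) = M * q' + M + M := by ring
      have : n + m + 1 = M * (q' + 2) + (r - 1) := by omega
      rw [this, Nat.mul_add_div hM0, Nat.div_eq_of_lt (by omega : r - 1 < M)]
    rw [d3]
    omega
end

section
/- Let n ≥ m ≥ 1 be integers, k = ⌊n/(m+1)⌋, and suppose n = (k+1)(m+1)−1 or n = (k+1)(m+1)−2. Set τ = ⋃_{j=0}^{k} {j(m+1)+1, j(m+1)+2, …, j(m+1)+m−1} ⊆ [n]. Then: (i) |τ| = (k+1)(m−1); (ii) τ contains no m consecutive integers; (iii) for every i ∈ [n] \ τ, the set τ ∪ {i} contains m consecutive integers; and (iv) |τ| = n + 1 − ⌊(n+1)/(m+1)⌋ − ⌈(n+1)/(m+1)⌉. -/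
/-- Case (a): if `n = (k+1)(m+1)−1` or `n = (k+1)(m+1)−2` where `k = ⌊n/(m+1)⌋`, then
`τ = ⋃_{j=0}^{k} {j(m+1)+1, …, j(m+1)+m−1}` is a subset of `[n]` with
`|τ| = (k+1)(m−1)` containing no `m` consecutive integers, such that `τ ∪ {i}`
contains `m` consecutive integers for every `i ∈ [n] \ τ`, and
`|τ| = n + 1 − ⌊(n+1)/(m+1)⌋ − ⌈(n+1)/(m+1)⌉.` -/
theorem stmt_5 (n m : ℕ) (hm : 1 ≤ m) (hn : m ≤ n)
    (k : ℕ) (hk : k = n / (m + 1))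
    (hcase : n = (k + 1) * (m + 1) - 1 ∨ n = (k + 1) * (m + 1) - 2)
    (τ : Finset ℕ)
    (hτ : τ = (Finset.range (k + 1)).biUnion
      (fun j => Finset.Icc (j * (m + 1) + 1) (j * (m + 1) + m - 1))) :
    τ ⊆ Finset.Icc 1 n ∧
    τ.card = (k + 1) * (m - 1) ∧
    ¬ HasConsec m τ ∧
    (∀ i ∈ Finset.Icc 1 n, i ∉ τ → HasConsec m (insert i τ)) ∧
    τ.card = n + 1 - (n + 1) / (m + 1) - (n + m + 1) / (m + 1) := by
  -- basic facts about `k`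
  obtain ⟨r0, hr0, hr0lt⟩ : ∃ r0, (m + 1) * k + r0 = n ∧ r0 < m + 1 := by
    refine ⟨n % (m + 1), ?_, Nat.mod_lt _ (by omega)⟩
    rw [hk]; exact Nat.div_add_mod n (m + 1)
  have hcomm : k * (m + 1) = (m + 1) * k := by ring
  have hub : k * (m + 1) + m - 1 ≤ n := by
    have he : (k + 1) * (m + 1) = k * (m + 1) + m + 1 := by ring
    omega
  -- membership characterization
  have hmem : ∀ x, x ∈ τ ↔ ∃ j, j ≤ k ∧ j * (m + 1) + 1 ≤ x ∧ x ≤ j * (m + 1) + m - 1 := by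
    intro x
    simp only [hτ, Finset.mem_biUnion, Finset.mem_range, Finset.mem_Icc, Nat.lt_succ_iff,
      exists_prop]
  have hmem' : ∀ q l, q ≤ k → 1 ≤ l → l ≤ m - 1 → (m + 1) * q + l ∈ τ := by
    intro q l h1 h2 h3
    rw [hmem]
    refine ⟨q, h1, ?_, ?_⟩ <;>
    · have he : (m + 1) * q = q * (m + 1) := by ring
      omega
  have hres : ∀ x ∈ τ, 1 ≤ x % (m + 1) ∧ x % (m + 1) ≤ m - 1 := by
    intro x hx
    rw [hmem] at hx
    obtain ⟨j, hj, h1, h2⟩ := hx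
    obtain ⟨r, hr1, hr2, hxe⟩ : ∃ r, 1 ≤ r ∧ r ≤ m - 1 ∧ x = (m + 1) * j + r := by
      refine ⟨x - j * (m + 1), ?_, ?_, ?_⟩ <;>
      · have he : (m + 1) * j = j * (m + 1) := by ring
        omega
    rw [hxe, Nat.mul_add_mod, Nat.mod_eq_of_lt (by omega)]
    exact ⟨hr1, hr2⟩
  -- (i) subset
  have hsub : τ ⊆ Finset.Icc 1 n := by
    intro x hx
    rw [Finset.mem_Icc]
    rw [hmem] at hx
    obtain ⟨j, hj, h1, h2⟩ := hx
    have hjk : j * (m + 1) ≤ k * (m + 1) := Nat.mul_le_mul hj (le_refl (m + 1))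
    omega
  -- (ii) cardinality
  have hcard : τ.card = (k + 1) * (m - 1) := by
    have hdisj : ∀ j1 ∈ Finset.range (k + 1), ∀ j2 ∈ Finset.range (k + 1), j1 ≠ j2 →
        Disjoint (Finset.Icc (j1 * (m + 1) + 1) (j1 * (m + 1) + m - 1))
          (Finset.Icc (j2 * (m + 1) + 1) (j2 * (m + 1) + m - 1)) := by
      intro j1 _ j2 _ hne
      rw [Finset.disjoint_left]
      intro x hx1 hx2
      rw [Finset.mem_Icc] at hx1 hx2
      rcases Nat.lt_or_ge j1 j2 with h | h
      · have h2 := Nat.mul_le_mul (show j1 + 1 ≤ j2 by omega) (le_refl (m + 1))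
        have he : (j1 + 1) * (m + 1) = j1 * (m + 1) + (m + 1) := by ring
        omega
      · have h2 := Nat.mul_le_mul (show j2 + 1 ≤ j1 by omega) (le_refl (m + 1))
        have he : (j2 + 1) * (m + 1) = j2 * (m + 1) + (m + 1) := by ring
        omega
    rw [hτ, Finset.card_biUnion hdisj]
    have hterm : ∀ j ∈ Finset.range (k + 1),
        (Finset.Icc (j * (m + 1) + 1) (j * (m + 1) + m - 1)).card = m - 1 := by
      intro j _
      rw [Nat.card_Icc]
      omega
    rw [Finset.sum_congr rfl hterm, Finset.sum_const, Finset.card_range, smul_eq_mul]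
  -- (iii) no m consecutive integers
  have hnoc : ¬ HasConsec m τ := by
    rintro ⟨i, h⟩
    have h0 : i ∈ τ := by simpa using h 0 (by omega)
    obtain ⟨q, r, hqr, hrlt, hmr⟩ : ∃ q r, (m + 1) * q + r = i ∧ r < m + 1 ∧ i % (m + 1) = r :=
      ⟨i / (m + 1), i % (m + 1), Nat.div_add_mod i (m + 1), Nat.mod_lt _ (by omega), rfl⟩
    have hi := hres i h0
    rw [hmr] at hi
    have hl : m - r < m := by omega
    have h2 := hres _ (h _ hl)
    have he : i + (m - r) = (m + 1) * q + m := by omega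
    rw [he, Nat.mul_add_mod, Nat.mod_eq_of_lt (by omega)] at h2
    omega
  refine ⟨hsub, hcard, hnoc, ?_, ?_⟩
  -- (iv) insert
  · intro i hi hit
    rw [Finset.mem_Icc] at hi
    obtain ⟨q, r, hqr, hrlt⟩ : ∃ q r, (m + 1) * q + r = i ∧ r < m + 1 :=
      ⟨i / (m + 1), i % (m + 1), Nat.div_add_mod i (m + 1), Nat.mod_lt _ (by omega)⟩
    have hq : q ≤ k := by
      by_contra hc
      have h2 := Nat.mul_le_mul (le_refl (m + 1)) (show k + 1 ≤ q by omega)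
      have he : (m + 1) * (k + 1) = (m + 1) * k + (m + 1) := by ring
      omega
    have hr : r = 0 ∨ r = m := by
      by_contra hc
      push_neg at hc
      exact hit (hqr ▸ hmem' q r hq (by omega) (by omega))
    rcases hr with hr | hr
    · refine ⟨i, fun l hl => ?_⟩
      rcases Nat.eq_zero_or_pos l with h0 | h0
      · subst h0; simp
      · refine Finset.mem_insert_of_mem ?_
        have he : i + l = (m + 1) * q + l := by omega
        rw [he]
        exact hmem' q l hq h0 (by omega)
    · refine ⟨(m + 1) * q + 1, fun l hl => ?_⟩
      rcases Nat.lt_or_ge l (m - 1) with h0 | h0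
      · refine Finset.mem_insert_of_mem ?_
        have he : (m + 1) * q + 1 + l = (m + 1) * q + (l + 1) := by omega
        rw [he]
        exact hmem' q (l + 1) hq (by omega) (by omega)
      · have he : (m + 1) * q + 1 + l = i := by omega
        rw [he]
        exact Finset.mem_insert_self _ _
  -- (v) the cardinality formula
  · have hrfac : (m + 1) * (k + 1) = (k + 1) * (m - 1) + 2 * (k + 1) := by
      obtain ⟨m0, rfl⟩ : ∃ m0, m = m0 + 1 := ⟨m - 1, by omega⟩
      simp only [Nat.add_sub_cancel]
      ring
    have he : (k + 1) * (m + 1) = (m + 1) * k + (m + 1) := by ring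
    have he2 : (m + 1) * (k + 1) = (m + 1) * k + (m + 1) := by ring
    rcases hcase with hc | hc
    · have h1 : n + 1 = (m + 1) * (k + 1) := by omega
      have h2 : n + m + 1 = (m + 1) * (k + 1) + m := by omega
      have d1 : (n + 1) / (m + 1) = k + 1 := by
        rw [h1]; exact Nat.mul_div_cancel_left _ (by omega)
      have d2 : (n + m + 1) / (m + 1) = k + 1 := by
        rw [h2, Nat.mul_add_div (by omega), Nat.div_eq_of_lt (by omega)]
      rw [hcard, d1, d2]
      omega
    · have h1 : n + 1 = (m + 1) * k + m := by omega
      have h2 : n + m + 1 = (m + 1) * (k + 1) + (m - 1) := by omega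
      have d1 : (n + 1) / (m + 1) = k := by
        rw [h1, Nat.mul_add_div (by omega), Nat.div_eq_of_lt (by omega)]
        omega
      have d2 : (n + m + 1) / (m + 1) = k + 1 := by
        rw [h2, Nat.mul_add_div (by omega), Nat.div_eq_of_lt (by omega)]
      rw [hcard, d1, d2]
      omega
end

section
/- Let K be a field and n, m integers with m ≥ 1 and n ≥ 2m. Then the colon ideal (I_{n,m} : x_m) equals the ideal of S generated by the monomials u_i/x_m = ∏_{i ≤ l ≤ i+m−1, l ≠ m} x_l for 1 ≤ i ≤ m, together with the monomials u_i for m+2 ≤ i ≤ n−m+1. (In particular u_{m+1} is omitted, since u_m/x_m divides u_{m+1}.) -/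
open MvPolynomial

/-- The generator `u_i = x_i x_{i+1} ⋯ x_{i+m-1}` of the path ideal, where the
variables of `K[x_1,…,x_n]` are 1-indexed via `x_t = X ⟨t-1⟩`. -/
noncomputable def pathGen (K : Type) [Field K] (n m i : ℕ) : MvPolynomial (Fin n) K :=
  ∏ j ∈ Finset.univ.filter (fun j : Fin n => i ≤ (j : ℕ) + 1 ∧ (j : ℕ) + 1 < i + m),
    X j

/-- The monomial `u_i / x_p = ∏_{i ≤ l ≤ i+m-1, l ≠ p} x_l`. -/
noncomputable def pathGenDiv (K : Type) [Field K] (n m i p : ℕ) : MvPolynomial (Fin n) K :=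
  ∏ j ∈ Finset.univ.filter
      (fun j : Fin n => (i ≤ (j : ℕ) + 1 ∧ (j : ℕ) + 1 < i + m) ∧ (j : ℕ) + 1 ≠ p),
    X j

/-- The path ideal `I_{n,m} = (u_1, …, u_{n-m+1}) ⊆ K[x_1,…,x_n]` of the line graph. -/
noncomputable def pathIdeal (K : Type) [Field K] (n m : ℕ) : Ideal (MvPolynomial (Fin n) K) :=
  Ideal.span {q | ∃ i : ℕ, 1 ≤ i ∧ i ≤ n - m + 1 ∧ q = pathGen K n m i}

/-- The variable `x_t` of `K[x_1,…,x_n]` (1-indexed; junk value `0` out of range). -/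
noncomputable def xv (K : Type) [Field K] (n t : ℕ) : MvPolynomial (Fin n) K :=
  if h : 1 ≤ t ∧ t ≤ n then X (⟨t - 1, by omega⟩ : Fin n) else 0

/-- indicator exponent vector of a finite set of variables -/
noncomputable def eInd {n : ℕ} (T : Finset (Fin n)) : Fin n →₀ ℕ :=
  ∑ j ∈ T, Finsupp.single j 1

lemma eInd_apply {n : ℕ} (T : Finset (Fin n)) (j : Fin n) :
    eInd T j = if j ∈ T then 1 else 0 := by
  classical
  rw [eInd, Finset.sum_apply']
  simp [Finsupp.single_apply]

lemma eInd_le_iff {n : ℕ} (T : Finset (Fin n)) (d : Fin n →₀ ℕ) :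
    eInd T ≤ d ↔ ∀ j ∈ T, 1 ≤ d j := by
  rw [Finsupp.le_def]
  constructor
  · intro h j hj
    have := h j
    rwa [eInd_apply, if_pos hj] at this
  · intro h j
    rw [eInd_apply]
    split
    · exact h j ‹_›
    · exact Nat.zero_le _

lemma prod_X_eq_monomial {K : Type} [Field K] {n : ℕ} (T : Finset (Fin n)) :
    (∏ j ∈ T, (X j : MvPolynomial (Fin n) K)) = monomial (eInd T) 1 := by
  classical
  induction T using Finset.induction with
  | empty => simp [eInd]
  | insert a s h ih =>
    rw [Finset.prod_insert h, ih, X, monomial_mul, one_mul, eInd, eInd,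
      Finset.sum_insert h]

/-- the key combinatorial equivalence on exponent vectors -/
lemma core {n m : ℕ} (hm : 1 ≤ m) (hn : 2 * m ≤ n) (hmn : m - 1 < n) (d : Fin n →₀ ℕ) :
    (∃ i : ℕ, 1 ≤ i ∧ i ≤ n - m + 1 ∧
        ∀ j : Fin n, (i ≤ (j : ℕ) + 1 ∧ (j : ℕ) + 1 < i + m) →
          1 ≤ (d + Finsupp.single (⟨m - 1, hmn⟩ : Fin n) 1 : Fin n →₀ ℕ) j) ↔
      ((∃ i : ℕ, 1 ≤ i ∧ i ≤ m ∧
          ∀ j : Fin n, ((i ≤ (j : ℕ) + 1 ∧ (j : ℕ) + 1 < i + m) ∧ (j : ℕ) + 1 ≠ m) →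
            1 ≤ d j) ∨
        (∃ i : ℕ, m + 2 ≤ i ∧ i ≤ n - m + 1 ∧
          ∀ j : Fin n, (i ≤ (j : ℕ) + 1 ∧ (j : ℕ) + 1 < i + m) → 1 ≤ d j)) := by
  have hsub : m ≤ n - m + 1 := by omega
  constructor
  · rintro ⟨i, hi1, hi2, H⟩
    by_cases him : i ≤ m
    · left
      refine ⟨i, hi1, him, fun j hj => ?_⟩
      have h2 := H j hj.1
      have hpj : (⟨m - 1, hmn⟩ : Fin n) ≠ j := by
        intro h
        exact hj.2 (by have := congrArg Fin.val h; simp at this; omega)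
      rwa [Finsupp.add_apply, Finsupp.single_apply, if_neg hpj, add_zero] at h2
    · by_cases hi' : i = m + 1
      · left
        refine ⟨m, hm, le_refl m, fun j hj => ?_⟩
        have hj' : i ≤ (j : ℕ) + 1 ∧ (j : ℕ) + 1 < i + m := by
          obtain ⟨⟨ha, hb⟩, hc⟩ := hj; omega
        have h2 := H j hj'
        have hpj : (⟨m - 1, hmn⟩ : Fin n) ≠ j := by
          intro h
          have := congrArg Fin.val h; simp at this; omega
        rwa [Finsupp.add_apply, Finsupp.single_apply, if_neg hpj, add_zero] at h2
      · right
        refine ⟨i, by omega, hi2, fun j hj => ?_⟩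
        have h2 := H j hj
        have hpj : (⟨m - 1, hmn⟩ : Fin n) ≠ j := by
          intro h
          have := congrArg Fin.val h; simp at this; omega
        rwa [Finsupp.add_apply, Finsupp.single_apply, if_neg hpj, add_zero] at h2
  · rintro (⟨i, hi1, hi2, H⟩ | ⟨i, hi1, hi2, H⟩)
    · refine ⟨i, hi1, by omega, fun j hj => ?_⟩
      rw [Finsupp.add_apply, Finsupp.single_apply]
      by_cases hpj : (⟨m - 1, hmn⟩ : Fin n) = j
      · rw [if_pos hpj]; omega
      · rw [if_neg hpj, add_zero]
        refine H j ⟨hj, fun h => hpj ?_⟩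
        exact Fin.ext (by simp; omega)
    · refine ⟨i, by omega, hi2, fun j hj => ?_⟩
      have := H j hj
      rw [Finsupp.add_apply]
      exact le_trans this (Nat.le_add_right _ _)

/-- For `m ≥ 1` and `n ≥ 2m`, the colon ideal `(I_{n,m} : x_m)` is generated by
`u_i/x_m` for `1 ≤ i ≤ m` together with `u_i` for `m+2 ≤ i ≤ n-m+1`. -/
theorem stmt_7 (K : Type) [Field K] (n m : ℕ) (hm : 1 ≤ m) (hn : 2 * m ≤ n) :
    (pathIdeal K n m).colon (Ideal.span {xv K n m}) =
      Ideal.span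
        ({q | ∃ i : ℕ, 1 ≤ i ∧ i ≤ m ∧ q = pathGenDiv K n m i m} ∪
          {q | ∃ i : ℕ, m + 2 ≤ i ∧ i ≤ n - m + 1 ∧ q = pathGen K n m i}) := by
  classical
  have hmn : m - 1 < n := by omega
  have hxv : xv K n m = X (⟨m - 1, hmn⟩ : Fin n) := by
    rw [xv, dif_pos ⟨hm, by omega⟩]
  -- describe generating sets as images of monomials
  have eqI : {q : MvPolynomial (Fin n) K | ∃ i : ℕ, 1 ≤ i ∧ i ≤ n - m + 1 ∧ q = pathGen K n m i}
      = (fun s => monomial s (1 : K)) ''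
        {s : Fin n →₀ ℕ | ∃ i : ℕ, 1 ≤ i ∧ i ≤ n - m + 1 ∧
          s = eInd (Finset.univ.filter
            (fun j : Fin n => i ≤ (j : ℕ) + 1 ∧ (j : ℕ) + 1 < i + m))} := by
    ext q
    simp only [Set.mem_setOf_eq, Set.mem_image]
    constructor
    · rintro ⟨i, h1, h2, rfl⟩
      exact ⟨_, ⟨i, h1, h2, rfl⟩, (prod_X_eq_monomial _).symm⟩
    · rintro ⟨s, ⟨i, h1, h2, rfl⟩, rfl⟩
      exact ⟨i, h1, h2, (prod_X_eq_monomial _).symm⟩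
  have eqJ : ({q : MvPolynomial (Fin n) K | ∃ i : ℕ, 1 ≤ i ∧ i ≤ m ∧ q = pathGenDiv K n m i m} ∪
        {q | ∃ i : ℕ, m + 2 ≤ i ∧ i ≤ n - m + 1 ∧ q = pathGen K n m i})
      = (fun s => monomial s (1 : K)) ''
        ({s : Fin n →₀ ℕ | ∃ i : ℕ, 1 ≤ i ∧ i ≤ m ∧
            s = eInd (Finset.univ.filter
              (fun j : Fin n => (i ≤ (j : ℕ) + 1 ∧ (j : ℕ) + 1 < i + m) ∧ (j : ℕ) + 1 ≠ m))} ∪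
          {s : Fin n →₀ ℕ | ∃ i : ℕ, m + 2 ≤ i ∧ i ≤ n - m + 1 ∧
            s = eInd (Finset.univ.filter
              (fun j : Fin n => i ≤ (j : ℕ) + 1 ∧ (j : ℕ) + 1 < i + m))}) := by
    rw [Set.image_union]
    congr 1
    · ext q
      simp only [Set.mem_setOf_eq, Set.mem_image]
      constructor
      · rintro ⟨i, h1, h2, rfl⟩
        exact ⟨_, ⟨i, h1, h2, rfl⟩, (prod_X_eq_monomial _).symm⟩
      · rintro ⟨s, ⟨i, h1, h2, rfl⟩, rfl⟩
        exact ⟨i, h1, h2, (prod_X_eq_monomial _).symm⟩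
    · ext q
      simp only [Set.mem_setOf_eq, Set.mem_image]
      constructor
      · rintro ⟨i, h1, h2, rfl⟩
        exact ⟨_, ⟨i, h1, h2, rfl⟩, (prod_X_eq_monomial _).symm⟩
      · rintro ⟨s, ⟨i, h1, h2, rfl⟩, rfl⟩
        exact ⟨i, h1, h2, (prod_X_eq_monomial _).symm⟩
  ext f
  rw [Ideal.mem_colon_span_singleton, hxv, pathIdeal, eqI, eqJ,
    mem_ideal_span_monomial_image, mem_ideal_span_monomial_image]
  constructor
  · intro h d hd
    have hd' : d + Finsupp.single (⟨m - 1, hmn⟩ : Fin n) 1 ∈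
        (f * X (⟨m - 1, hmn⟩ : Fin n)).support := by
      rw [support_mul_X]
      exact Finset.mem_map_of_mem _ hd
    obtain ⟨s, hs, hle⟩ := h _ hd'
    obtain ⟨i, h1, h2, rfl⟩ := hs
    rw [eInd_le_iff] at hle
    simp only [Finset.mem_filter, Finset.mem_univ, true_and] at hle
    have := (core hm hn hmn d).mp ⟨i, h1, h2, hle⟩
    rcases this with ⟨i, h1, h2, H⟩ | ⟨i, h1, h2, H⟩
    · refine ⟨_, Or.inl ⟨i, h1, h2, rfl⟩, ?_⟩
      rw [eInd_le_iff]
      simp only [Finset.mem_filter, Finset.mem_univ, true_and]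
      exact H
    · refine ⟨_, Or.inr ⟨i, h1, h2, rfl⟩, ?_⟩
      rw [eInd_le_iff]
      simp only [Finset.mem_filter, Finset.mem_univ, true_and]
      exact H
  · intro h d hd
    rw [support_mul_X, Finset.mem_map] at hd
    obtain ⟨d0, hd0, rfl⟩ := hd
    obtain ⟨s, hs, hle⟩ := h d0 hd0
    have hcore : (∃ i : ℕ, 1 ≤ i ∧ i ≤ m ∧
          ∀ j : Fin n, ((i ≤ (j : ℕ) + 1 ∧ (j : ℕ) + 1 < i + m) ∧ (j : ℕ) + 1 ≠ m) →
            1 ≤ d0 j) ∨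
        (∃ i : ℕ, m + 2 ≤ i ∧ i ≤ n - m + 1 ∧
          ∀ j : Fin n, (i ≤ (j : ℕ) + 1 ∧ (j : ℕ) + 1 < i + m) → 1 ≤ d0 j) := by
      rcases hs with ⟨i, h1, h2, rfl⟩ | ⟨i, h1, h2, rfl⟩
      · left
        refine ⟨i, h1, h2, ?_⟩
        rw [eInd_le_iff] at hle
        simpa only [Finset.mem_filter, Finset.mem_univ, true_and] using hle
      · right
        refine ⟨i, h1, h2, ?_⟩
        rw [eInd_le_iff] at hle
        simpa only [Finset.mem_filter, Finset.mem_univ, true_and] using hle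
    obtain ⟨i, h1, h2, H⟩ := (core hm hn hmn d0).mpr hcore
    refine ⟨_, ⟨i, h1, h2, rfl⟩, ?_⟩
    rw [eInd_le_iff]
    simp only [Finset.mem_filter, Finset.mem_univ, true_and]
    have : addRightEmbedding (Finsupp.single (⟨m - 1, hmn⟩ : Fin n) 1) d0
        = d0 + Finsupp.single (⟨m - 1, hmn⟩ : Fin n) 1 := rfl
    rw [this]
    exact H
end

section
/- Let K be a field, m ≥ 3 and n ≥ 2m integers, k = ⌊(n+1)/(m+1)⌋, and 1 ≤ j ≤ k−1. Then the colon ideal L_j = (I_{n,m} : x_m x_{2m+1} x_{3m+2} ⋯ x_{j(m+1)−1}) (colon by the product ∏_{l=1}^{j} x_{l(m+1)−1}) equals the ideal of S generated by: for each 0 ≤ l ≤ j−1, the monomials u_i / x_{(l+1)(m+1)−1} for l(m+1)+1 ≤ i ≤ (l+1)(m+1)−1, together with the monomials u_i for j(m+1)+1 ≤ i ≤ n−m+1. -/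
open MvPolynomial

/-! ### Auxiliary machinery -/

/-- Exponent vector of `pathGen`. -/
noncomputable def EA (n m i : ℕ) : Fin n →₀ ℕ :=
  ∑ t ∈ Finset.univ.filter (fun t : Fin n => i ≤ (t : ℕ) + 1 ∧ (t : ℕ) + 1 < i + m),
    Finsupp.single t 1

/-- Exponent vector of `pathGenDiv`. -/
noncomputable def ED (n m i p : ℕ) : Fin n →₀ ℕ :=
  ∑ t ∈ Finset.univ.filter
      (fun t : Fin n => (i ≤ (t : ℕ) + 1 ∧ (t : ℕ) + 1 < i + m) ∧ (t : ℕ) + 1 ≠ p),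
    Finsupp.single t 1

lemma prodX_monomial (K : Type) [Field K] (n : ℕ) {α : Type} (s : Finset α) (g : α → Fin n) :
    (∏ l ∈ s, (X (g l) : MvPolynomial (Fin n) K)) =
      monomial (∑ l ∈ s, Finsupp.single (g l) 1) 1 := by
  classical
  induction s using Finset.induction with
  | empty => simp
  | insert a s h ih =>
    rw [Finset.prod_insert h, Finset.sum_insert h, ih, X, monomial_mul, one_mul]

lemma pathGen_eq (K : Type) [Field K] (n m i : ℕ) :
    pathGen K n m i = monomial (EA n m i) 1 := by
  rw [pathGen, EA]
  exact prodX_monomial K n _ id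

lemma pathGenDiv_eq (K : Type) [Field K] (n m i p : ℕ) :
    pathGenDiv K n m i p = monomial (ED n m i p) 1 := by
  rw [pathGenDiv, ED]
  exact prodX_monomial K n _ id

lemma EA_apply (n m i : ℕ) (t : Fin n) :
    EA n m i t = if i ≤ (t : ℕ) + 1 ∧ (t : ℕ) + 1 < i + m then 1 else 0 := by
  classical
  rw [EA, Finsupp.finset_sum_apply]
  rw [Finset.sum_congr rfl (fun x _ => Finsupp.single_apply)]
  rw [Finset.sum_ite_eq' _ t (fun _ => 1)]
  simp

lemma ED_apply (n m i p : ℕ) (t : Fin n) :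
    ED n m i p t =
      if (i ≤ (t : ℕ) + 1 ∧ (t : ℕ) + 1 < i + m) ∧ (t : ℕ) + 1 ≠ p then 1 else 0 := by
  classical
  rw [ED, Finsupp.finset_sum_apply]
  rw [Finset.sum_congr rfl (fun x _ => Finsupp.single_apply)]
  rw [Finset.sum_ite_eq' _ t (fun _ => 1)]
  simp

lemma key_fwd (n m j : ℕ) (hm : 3 ≤ m) (hj : 1 ≤ j) (hjn : j * (m + 1) + (m + 1) ≤ n + 1)
    (eF d : Fin n →₀ ℕ)
    (heF0 : ∀ t : Fin n, (∀ l, 1 ≤ l → l ≤ j → l * (m + 1) - 2 ≠ (t : ℕ)) → eF t = 0)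
    (i : ℕ) (h1 : 1 ≤ i) (h2 : i ≤ n - m + 1) (hle : EA n m i ≤ eF + d) :
    ∃ e : Fin n →₀ ℕ,
      ((∃ l i', l + 1 ≤ j ∧ l * (m + 1) + 1 ≤ i' ∧ i' ≤ (l + 1) * (m + 1) - 1 ∧
          e = ED n m i' ((l + 1) * (m + 1) - 1)) ∨
        (∃ i', j * (m + 1) + 1 ≤ i' ∧ i' ≤ n - m + 1 ∧ e = EA n m i')) ∧ e ≤ d := by
  have hle' : ∀ t : Fin n, i ≤ (t : ℕ) + 1 → (t : ℕ) + 1 < i + m → 1 ≤ eF t + d t := by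
    intro t ht1 ht2
    have h := (Finsupp.le_def.mp hle) t
    rw [EA_apply, if_pos ⟨ht1, ht2⟩] at h
    simpa using h
  by_cases hA : j * (m + 1) + 1 ≤ i
  · refine ⟨EA n m i, Or.inr ⟨i, hA, h2, rfl⟩, ?_⟩
    rw [Finsupp.le_def]
    intro t
    rw [EA_apply]
    split_ifs with htw
    · have h0 : eF t = 0 := by
        apply heF0
        intro l hl1 hl2 hlt
        have hml : l * (m + 1) ≤ j * (m + 1) := Nat.mul_le_mul_right _ hl2
        have hm1l : 1 * (m + 1) ≤ l * (m + 1) := Nat.mul_le_mul_right _ hl1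
        have htw1 := htw.1
        omega
      have := hle' t htw.1 htw.2
      omega
    · exact Nat.zero_le _
  · push_neg at hA
    by_cases hB : ∃ l, 1 ≤ l ∧ l ≤ j ∧ i ≤ l * (m + 1) - 1 ∧ l * (m + 1) - 1 ≤ i + m - 1
    · obtain ⟨l, hl1, hl2, hp1, hp2⟩ := hB
      obtain ⟨l', rfl⟩ : ∃ l', l = l' + 1 := ⟨l - 1, by omega⟩
      have hml : (l' + 1) * (m + 1) ≤ j * (m + 1) := Nat.mul_le_mul_right _ hl2
      have hexp : (l' + 1) * (m + 1) = l' * (m + 1) + (m + 1) := by ring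
      refine ⟨ED n m i ((l' + 1) * (m + 1) - 1), Or.inl ⟨l', i, hl2, ?_, ?_, rfl⟩, ?_⟩
      · set A := (l' + 1) * (m + 1)
        omega
      · exact hp1
      · rw [Finsupp.le_def]
        intro t
        rw [ED_apply]
        split_ifs with htw
        · have h0 : eF t = 0 := by
            apply heF0
            intro l'' h1'' h2'' hlt
            have hne := htw.2
            rcases Nat.lt_trichotomy l'' (l' + 1) with hc | hc | hc
            · have hmc : (l'' + 1) * (m + 1) ≤ (l' + 1) * (m + 1) :=
                Nat.mul_le_mul_right _ (by omega)
              have hexp2 : (l'' + 1) * (m + 1) = l'' * (m + 1) + (m + 1) := by ring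
              have hm1 : 1 * (m + 1) ≤ l'' * (m + 1) := Nat.mul_le_mul_right _ h1''
              have htw1 := htw.1.1
              omega
            · have heq2 : l'' * (m + 1) = (l' + 1) * (m + 1) := by rw [hc]
              have hm1 : 1 * (m + 1) ≤ l'' * (m + 1) := Nat.mul_le_mul_right _ h1''
              omega
            · have hmc : (l' + 1 + 1) * (m + 1) ≤ l'' * (m + 1) :=
                Nat.mul_le_mul_right _ (by omega)
              have hexp2 : (l' + 1 + 1) * (m + 1) = (l' + 1) * (m + 1) + (m + 1) := by ring
              have hm1 : 1 * (m + 1) ≤ (l' + 1) * (m + 1) := Nat.mul_le_mul_right _ (by omega)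
              have htw2 := htw.1.2
              omega
          have := hle' t htw.1.1 htw.1.2
          omega
        · exact Nat.zero_le _
    · push_neg at hB
      have hq : ∃ q, 1 ≤ q ∧ q ≤ j ∧ i = q * (m + 1) := by
        obtain ⟨q, r, hr, hiq⟩ : ∃ q r, r < m + 1 ∧ i = q * (m + 1) + r :=
          ⟨i / (m + 1), i % (m + 1), Nat.mod_lt _ (by omega), by
            rw [mul_comm]; exact (Nat.div_add_mod i (m + 1)).symm⟩
        by_cases hr0 : r = 0
        · have hiq' : i = q * (m + 1) := by omega
          have hq1 : 1 ≤ q := by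
            rcases Nat.eq_zero_or_pos q with h | h
            · rw [h, zero_mul] at hiq'; omega
            · exact h
          have hq2 : q ≤ j := by
            have : q * (m + 1) ≤ j * (m + 1) := by omega
            exact Nat.le_of_mul_le_mul_right this (by omega)
          exact ⟨q, hq1, hq2, hiq'⟩
        · exfalso
          have hqj : q < j := by
            have h2' : q * (m + 1) < j * (m + 1) := by omega
            exact Nat.lt_of_mul_lt_mul_right h2'
          have hexp2 : (q + 1) * (m + 1) = q * (m + 1) + (m + 1) := by ring
          have hc3 : i ≤ (q + 1) * (m + 1) - 1 := by omega
          have hBq := hB (q + 1) (by omega) hqj hc3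
          omega
      obtain ⟨q, hq1, hq2, rfl⟩ := hq
      have hm1 : 1 * (m + 1) ≤ q * (m + 1) := Nat.mul_le_mul_right _ hq1
      have hexp : q * (m + 1) = (q - 1 + 1) * (m + 1) := by
        congr 1; omega
      refine ⟨ED n m (q * (m + 1) - 1) (q * (m + 1) - 1),
        Or.inl ⟨q - 1, q * (m + 1) - 1, by omega, ?_, ?_, by rw [← hexp]⟩, ?_⟩
      · have hexp2 : (q - 1 + 1) * (m + 1) = (q - 1) * (m + 1) + (m + 1) := by ring
        rw [← hexp] at hexp2
        omega
      · rw [← hexp]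
      · rw [Finsupp.le_def]
        intro t
        rw [ED_apply]
        split_ifs with htw
        · obtain ⟨⟨ht1, ht2⟩, ht3⟩ := htw
          have hwin1 : q * (m + 1) ≤ (t : ℕ) + 1 := by omega
          have hwin2 : (t : ℕ) + 1 < q * (m + 1) + m := by omega
          have h0 : eF t = 0 := by
            apply heF0
            intro l'' h1'' h2'' hlt
            have hm1'' : 1 * (m + 1) ≤ l'' * (m + 1) := Nat.mul_le_mul_right _ h1''
            have hBl := hB l'' h1'' h2'' (by omega)
            omega
          have := hle' t hwin1 hwin2
          omega
        · exact Nat.zero_le _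

lemma key_bwd (n m j : ℕ) (hm : 3 ≤ m) (hj : 1 ≤ j) (hjn : j * (m + 1) + (m + 1) ≤ n + 1)
    (φ : ℕ → Fin n) (hφval : ∀ l, 1 ≤ l → l ≤ j → (φ l : ℕ) = l * (m + 1) - 2)
    (eF d : Fin n →₀ ℕ)
    (heF1 : ∀ l, 1 ≤ l → l ≤ j → 1 ≤ eF (φ l))
    (e : Fin n →₀ ℕ)
    (he : (∃ l i', l + 1 ≤ j ∧ l * (m + 1) + 1 ≤ i' ∧ i' ≤ (l + 1) * (m + 1) - 1 ∧
            e = ED n m i' ((l + 1) * (m + 1) - 1)) ∨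
          (∃ i', j * (m + 1) + 1 ≤ i' ∧ i' ≤ n - m + 1 ∧ e = EA n m i'))
    (hle : ∀ t, eF t + e t ≤ d t) :
    ∃ i, 1 ≤ i ∧ i ≤ n - m + 1 ∧ EA n m i ≤ d := by
  rcases he with ⟨l, i', hlj, hi1, hi2, rfl⟩ | ⟨i', hi1, hi2, rfl⟩
  · have hexp : (l + 1) * (m + 1) = l * (m + 1) + (m + 1) := by ring
    have hml : (l + 1) * (m + 1) ≤ j * (m + 1) := Nat.mul_le_mul_right _ hlj
    have hm1 : 1 * (m + 1) ≤ (l + 1) * (m + 1) := Nat.mul_le_mul_right _ (by omega)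
    refine ⟨i', ?_, ?_, ?_⟩
    · set A := l * (m + 1); omega
    · set A := l * (m + 1)
      omega
    · rw [Finsupp.le_def]
      intro t
      rw [EA_apply]
      split_ifs with htw
      · by_cases hp : (t : ℕ) + 1 = (l + 1) * (m + 1) - 1
        · have ht : t = φ (l + 1) := by
            apply Fin.ext
            rw [hφval (l + 1) (by omega) hlj]
            omega
          have h1 := heF1 (l + 1) (by omega) hlj
          rw [← ht] at h1
          have := hle t
          omega
        · have hEd : 1 ≤ ED n m i' ((l + 1) * (m + 1) - 1) t := by
            rw [ED_apply, if_pos ⟨htw, hp⟩]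
          have := hle t
          omega
      · exact Nat.zero_le _
  · refine ⟨i', by omega, hi2, ?_⟩
    rw [Finsupp.le_def]
    intro t
    have := hle t
    omega

/-- For `m ≥ 3`, `n ≥ 2m`, `k = ⌊(n+1)/(m+1)⌋` and `1 ≤ j ≤ k-1`, the colon ideal
`L_j = (I_{n,m} : x_m x_{2m+1} ⋯ x_{j(m+1)-1})` is generated by the monomials
`u_i / x_{(l+1)(m+1)-1}` for `0 ≤ l ≤ j-1` and `l(m+1)+1 ≤ i ≤ (l+1)(m+1)-1`,
together with the monomials `u_i` for `j(m+1)+1 ≤ i ≤ n-m+1`. -/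
theorem stmt_9 (K : Type) [Field K] (n m : ℕ) (hm : 3 ≤ m) (hn : 2 * m ≤ n)
    (k : ℕ) (hk : k = (n + 1) / (m + 1)) (j : ℕ) (hj : 1 ≤ j) (hjk : j + 1 ≤ k) :
    (pathIdeal K n m).colon
        (Ideal.span {∏ l ∈ Finset.Icc 1 j, xv K n (l * (m + 1) - 1)}) =
      Ideal.span
        ({q | ∃ l i : ℕ, l + 1 ≤ j ∧ l * (m + 1) + 1 ≤ i ∧ i ≤ (l + 1) * (m + 1) - 1 ∧
            q = pathGenDiv K n m i ((l + 1) * (m + 1) - 1)} ∪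
          {q | ∃ i : ℕ, j * (m + 1) + 1 ≤ i ∧ i ≤ n - m + 1 ∧ q = pathGen K n m i}) := by
  classical
  have hjn : j * (m + 1) + (m + 1) ≤ n + 1 := by
    have h1 : j + 1 ≤ (n + 1) / (m + 1) := hk ▸ hjk
    have h2 : (j + 1) * (m + 1) ≤ n + 1 := (Nat.le_div_iff_mul_le (by omega)).1 h1
    have h3 : (j + 1) * (m + 1) = j * (m + 1) + (m + 1) := by ring
    omega
  set φ : ℕ → Fin n := fun l =>
    if h : l * (m + 1) - 2 < n then ⟨l * (m + 1) - 2, h⟩ else ⟨0, by omega⟩ with hφ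
  have hφval : ∀ l, 1 ≤ l → l ≤ j → (φ l : ℕ) = l * (m + 1) - 2 := by
    intro l h1 h2
    have hml : l * (m + 1) ≤ j * (m + 1) := Nat.mul_le_mul_right _ h2
    have hlt : l * (m + 1) - 2 < n := by
      omega
    simp only [hφ, dif_pos hlt]
  set eF : Fin n →₀ ℕ := ∑ l ∈ Finset.Icc 1 j, Finsupp.single (φ l) 1 with heF
  have hf : (∏ l ∈ Finset.Icc 1 j, xv K n (l * (m + 1) - 1)) = monomial eF (1 : K) := by
    rw [heF, ← prodX_monomial K n _ φ]
    apply Finset.prod_congr rfl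
    intro l hl
    rw [Finset.mem_Icc] at hl
    have hm1 : 1 * (m + 1) ≤ l * (m + 1) := Nat.mul_le_mul_right _ hl.1
    have hml : l * (m + 1) ≤ j * (m + 1) := Nat.mul_le_mul_right _ hl.2
    have hrange : 1 ≤ l * (m + 1) - 1 ∧ l * (m + 1) - 1 ≤ n := by
      constructor <;> (set A := l * (m + 1); set B := j * (m + 1); omega)
    rw [xv, dif_pos hrange]
    congr 1
    apply Fin.ext
    rw [hφval l hl.1 hl.2]
    simp only []
    omega
  have heF0 : ∀ t : Fin n, (∀ l, 1 ≤ l → l ≤ j → l * (m + 1) - 2 ≠ (t : ℕ)) → eF t = 0 := by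
    intro t ht
    rw [heF, Finsupp.finset_sum_apply]
    apply Finset.sum_eq_zero
    intro l hl
    rw [Finset.mem_Icc] at hl
    rw [Finsupp.single_apply, if_neg]
    intro heq
    exact ht l hl.1 hl.2 (by rw [← hφval l hl.1 hl.2]; exact congrArg Fin.val heq)
  have heF1 : ∀ l, 1 ≤ l → l ≤ j → 1 ≤ eF (φ l) := by
    intro l h1 h2
    rw [heF, Finsupp.finset_sum_apply]
    have hmem : l ∈ Finset.Icc 1 j := Finset.mem_Icc.mpr ⟨h1, h2⟩
    calc (1 : ℕ) = (Finsupp.single (φ l) 1 : Fin n →₀ ℕ) (φ l) := by simp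
      _ ≤ ∑ l' ∈ Finset.Icc 1 j, (Finsupp.single (φ l') 1 : Fin n →₀ ℕ) (φ l) :=
        Finset.single_le_sum
          (f := fun l' => (Finsupp.single (φ l') 1 : Fin n →₀ ℕ) (φ l))
          (fun _ _ => Nat.zero_le _) hmem
  have hgenset : {q : MvPolynomial (Fin n) K | ∃ i : ℕ, 1 ≤ i ∧ i ≤ n - m + 1 ∧
        q = pathGen K n m i} =
      (fun e => monomial e (1 : K)) '' {e | ∃ i : ℕ, 1 ≤ i ∧ i ≤ n - m + 1 ∧ e = EA n m i} := by
    ext q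
    simp only [Set.mem_setOf_eq, Set.mem_image]
    constructor
    · rintro ⟨i, a, b, rfl⟩
      exact ⟨EA n m i, ⟨i, a, b, rfl⟩, (pathGen_eq K n m i).symm⟩
    · rintro ⟨e, ⟨i, a, b, rfl⟩, rfl⟩
      exact ⟨i, a, b, (pathGen_eq K n m i).symm⟩
  have hR : ({q : MvPolynomial (Fin n) K | ∃ l i : ℕ, l + 1 ≤ j ∧ l * (m + 1) + 1 ≤ i ∧
          i ≤ (l + 1) * (m + 1) - 1 ∧ q = pathGenDiv K n m i ((l + 1) * (m + 1) - 1)} ∪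
        {q | ∃ i : ℕ, j * (m + 1) + 1 ≤ i ∧ i ≤ n - m + 1 ∧ q = pathGen K n m i}) =
      (fun e => monomial e (1 : K)) ''
        {e | (∃ l i : ℕ, l + 1 ≤ j ∧ l * (m + 1) + 1 ≤ i ∧ i ≤ (l + 1) * (m + 1) - 1 ∧
            e = ED n m i ((l + 1) * (m + 1) - 1)) ∨
          (∃ i : ℕ, j * (m + 1) + 1 ≤ i ∧ i ≤ n - m + 1 ∧ e = EA n m i)} := by
    ext q
    simp only [Set.mem_union, Set.mem_setOf_eq, Set.mem_image]
    constructor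
    · rintro (⟨l, i, a, b, c, rfl⟩ | ⟨i, a, b, rfl⟩)
      · exact ⟨_, Or.inl ⟨l, i, a, b, c, rfl⟩, (pathGenDiv_eq K n m i _).symm⟩
      · exact ⟨_, Or.inr ⟨i, a, b, rfl⟩, (pathGen_eq K n m i).symm⟩
    · rintro ⟨e, (⟨l, i, a, b, c, rfl⟩ | ⟨i, a, b, rfl⟩), rfl⟩
      · exact Or.inl ⟨l, i, a, b, c, (pathGenDiv_eq K n m i _).symm⟩
      · exact Or.inr ⟨i, a, b, (pathGen_eq K n m i).symm⟩
  rw [pathIdeal, hgenset, hR, hf]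
  ext p
  rw [Ideal.mem_colon_span_singleton, mul_comm p, mem_ideal_span_monomial_image,
    mem_ideal_span_monomial_image]
  constructor
  · intro H d hd
    have hd' : eF + d ∈ (monomial eF (1 : K) * p).support := by
      rw [mem_support_iff, coeff_monomial_mul', if_pos (le_add_right le_rfl),
        add_tsub_cancel_left, one_mul]
      rwa [mem_support_iff] at hd
    obtain ⟨e', he', hle⟩ := H _ hd'
    obtain ⟨i, hi1, hi2, rfl⟩ := he'
    obtain ⟨e, hgen, hled⟩ := key_fwd n m j hm hj hjn eF d heF0 i hi1 hi2 hle
    exact ⟨e, hgen, hled⟩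
  · intro H d hd
    rw [mem_support_iff, coeff_monomial_mul'] at hd
    have hfd : eF ≤ d := by
      by_contra hcon
      rw [if_neg hcon] at hd
      exact hd rfl
    rw [if_pos hfd, one_mul, ← mem_support_iff] at hd
    obtain ⟨e, he, hled⟩ := H _ hd
    have hle' : ∀ t, eF t + e t ≤ d t := by
      intro t
      have h1 := Finsupp.le_def.mp hled t
      rw [Finsupp.tsub_apply] at h1
      have h2 := Finsupp.le_def.mp hfd t
      omega
    obtain ⟨i, hi1, hi2, hEA⟩ := key_bwd n m j hm hj hjn φ hφval eF d heF1 e he hle'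
    exact ⟨EA n m i, ⟨i, hi1, hi2, rfl⟩, hEA⟩
end
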